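/- arXiv:2110.04114 — 10 statements merged into one kernel-verified Lean document; each statement's English description precedes it below -/
import Mathlib

section
/- Let Φ₁(z) = μz + c and Φ₂(z) = νz + d with |μ| ≤ 1 and |ν| ≤ 1, and suppose the composition operators C_{Φ₁} and C_{Φ₂} are bounded on H_E(ζ). Then C_{Φ₁}^* = C_{Φ₂} if and only if c = 0, d = 0 and \bar{μ} = ν. -/
open Filter ContinuousLinearMap
open scoped NNReal ENNReal
open scoped ComplexConjugate

noncomputable section

/-- The weighted Hardy space of entire functions `H_E(ζ)`, realized as the Hilbert space of
coefficient sequences: an entire function `g z = ∑ bₙ zⁿ` with `∑ |bₙ|² ζₙ² < ∞` is encoded by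
the `ℓ²`-sequence `n ↦ bₙ * ζₙ`.  With this identification the `lp`-inner product
`⟪f, g⟫ = ∑ conj (f n) * g n` is exactly `∑ conj bₙ * cₙ * ζₙ²` (Mathlib's convention:
conjugate-linear in the first variable). -/
abbrev HE (_ζ : ℕ → ℝ) : Type := lp (fun _ : ℕ => ℂ) 2

/-- The `n`-th Taylor coefficient `bₙ` of an element of `H_E(ζ)`. -/
def HE.coeff (ζ : ℕ → ℝ) (f : HE ζ) (n : ℕ) : ℂ := f n / (ζ n : ℂ)

/-- The entire function `z ↦ ∑ bₙ zⁿ` represented by an element of `H_E(ζ)`. -/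
def HE.toFun (ζ : ℕ → ℝ) (f : HE ζ) : ℂ → ℂ := fun z => ∑' n, HE.coeff ζ f n * z ^ n

namespace HEAux

open FormalMultilinearSeries
open scoped ComplexInnerProductSpace

variable {ζ : ℕ → ℝ}

lemma hasFPS (hζ : ∀ n, 0 < ζ n)
    (hlim : Tendsto (fun n : ℕ => (ζ n) ^ ((1 : ℝ) / n)) atTop atTop) (f : HE ζ) :
    HasFPowerSeriesAt (HE.toFun ζ f) (ofScalars ℂ (HE.coeff ζ f)) 0 := by
  set a := HE.coeff ζ f with ha
  have hev : ∀ᶠ n in atTop, ‖a n‖ ≤ ‖f‖ := by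
    filter_upwards [hlim.eventually_ge_atTop 1, eventually_ge_atTop 1] with n hn hn1
    have hpos := hζ n
    have hnz : ((n : ℝ)) ≠ 0 := by
      exact_mod_cast Nat.one_le_iff_ne_zero.mp hn1
    have hz1 : (1 : ℝ) ≤ ζ n := by
      have h1 : (1 : ℝ) ≤ (ζ n ^ ((1 : ℝ) / n)) ^ (n : ℕ) := one_le_pow₀ hn
      rwa [← Real.rpow_natCast (ζ n ^ ((1 : ℝ) / n)) n, ← Real.rpow_mul hpos.le,
        one_div, inv_mul_cancel₀ hnz, Real.rpow_one] at h1
    have hfn : ‖f n‖ ≤ ‖f‖ := lp.norm_apply_le_norm (by norm_num) f n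
    have hna : ‖a n‖ = ‖f n‖ / ζ n := by
      rw [ha]
      unfold HE.coeff
      simp [norm_div, Complex.norm_real, Real.norm_of_nonneg hpos.le, abs_of_pos hpos]
    rw [hna]
    calc ‖f n‖ / ζ n ≤ ‖f n‖ / 1 := by gcongr
      _ = ‖f n‖ := div_one _
      _ ≤ ‖f‖ := hfn
  obtain ⟨N, hN⟩ := eventually_atTop.mp hev
  set C : ℝ := ‖f‖ + ∑ k ∈ Finset.range N, ‖a k‖ with hC
  have hbound : ∀ n, ‖ofScalars ℂ a n‖ * (1 : ℝ≥0) ^ n ≤ C := by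
    intro n
    rw [ofScalars_norm]
    simp only [NNReal.coe_one, one_pow, mul_one]
    rcases le_or_gt N n with h | h
    · refine (hN n h).trans (le_add_of_nonneg_right ?_)
      exact Finset.sum_nonneg fun _ _ => norm_nonneg _
    · refine le_add_of_nonneg_left (norm_nonneg _) |>.trans' ?_
      exact Finset.single_le_sum (f := fun k => ‖a k‖) (fun i _ => norm_nonneg (a i)) (Finset.mem_range.mpr h)
  have hrad : 0 < (ofScalars ℂ a).radius := by
    have := (ofScalars ℂ a).le_radius_of_bound C hbound
    calc (0 : ENNReal) < ((1 : ℝ≥0) : ENNReal) := by simp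
      _ ≤ _ := this
  have hball := (ofScalars ℂ a).hasFPowerSeriesOnBall hrad
  have hsum : (ofScalars ℂ a).sum = HE.toFun ζ f := by
    funext z
    have h1 : (ofScalars ℂ a).sum z = ofScalarsSum a z := rfl
    rw [h1, ofScalars_sum_eq]
    exact tsum_congr fun n => by rw [smul_eq_mul]
  exact (hsum ▸ hball).hasFPowerSeriesAt

lemma ext_toFun (hζ : ∀ n, 0 < ζ n)
    (hlim : Tendsto (fun n : ℕ => (ζ n) ^ ((1 : ℝ) / n)) atTop atTop) {f g : HE ζ}
    (h : ∀ z, HE.toFun ζ f z = HE.toFun ζ g z) : f = g := by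
  have h1 := hasFPS hζ hlim f
  have h2 := hasFPS hζ hlim g
  rw [show HE.toFun ζ f = HE.toFun ζ g from funext h] at h1
  have hpq := h1.eq_formalMultilinearSeries h2
  have hco : HE.coeff ζ f = HE.coeff ζ g := ofScalars_series_injective ℂ ℂ hpq
  apply lp.ext
  funext n
  have hn := congrFun hco n
  unfold HE.coeff at hn
  have hzn : ((ζ n : ℂ)) ≠ 0 := by exact_mod_cast (hζ n).ne'
  field_simp at hn
  exact hn

lemma toFun_single (k : ℕ) (a : ℂ) (z : ℂ) :
    HE.toFun ζ (lp.single 2 k a) z = a / (ζ k : ℂ) * z ^ k := by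
  unfold HE.toFun HE.coeff
  rw [tsum_eq_single k]
  · rw [lp.single_apply_self]
  · intro b hb
    rw [lp.single_apply_ne (E := fun _ : ℕ => ℂ) 2 k a hb]
    simp

lemma toFun_pair (k l : ℕ) (hkl : k ≠ l) (a b : ℂ) (z : ℂ) :
    HE.toFun ζ (lp.single 2 k a + lp.single 2 l b) z
      = a / (ζ k : ℂ) * z ^ k + b / (ζ l : ℂ) * z ^ l := by
  unfold HE.toFun HE.coeff
  rw [tsum_eq_sum (s := {k, l}) ?_]
  · rw [Finset.sum_pair hkl]
    simp [lp.coeFn_add, lp.single_apply_self, lp.single_apply_ne (E := fun _ : ℕ => ℂ) 2 l b hkl,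
      lp.single_apply_ne (E := fun _ : ℕ => ℂ) 2 k a hkl.symm, Pi.single_apply, hkl, hkl.symm]
  · intro n hn
    simp only [Finset.mem_insert, Finset.mem_singleton, not_or] at hn
    simp [lp.coeFn_add, lp.single_apply_ne (E := fun _ : ℕ => ℂ) 2 k a hn.1, lp.single_apply_ne (E := fun _ : ℕ => ℂ) 2 l b hn.2, Pi.single_apply, hn.1, hn.2]

lemma op_single_zero (hζ : ∀ n, 0 < ζ n)
    (hlim : Tendsto (fun n : ℕ => (ζ n) ^ ((1 : ℝ) / n)) atTop atTop) {μ c : ℂ}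
    (T : HE ζ →L[ℂ] HE ζ)
    (hT : ∀ f : HE ζ, ∀ z : ℂ, HE.toFun ζ (T f) z = HE.toFun ζ f (μ * z + c)) :
    T (lp.single 2 0 1) = lp.single 2 0 1 := by
  refine ext_toFun hζ hlim fun z => ?_
  rw [hT, toFun_single, toFun_single]
  simp

lemma op_single_one (hζ : ∀ n, 0 < ζ n)
    (hlim : Tendsto (fun n : ℕ => (ζ n) ^ ((1 : ℝ) / n)) atTop atTop) {μ c : ℂ}
    (T : HE ζ →L[ℂ] HE ζ)
    (hT : ∀ f : HE ζ, ∀ z : ℂ, HE.toFun ζ (T f) z = HE.toFun ζ f (μ * z + c)) :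
    T (lp.single 2 1 1) = lp.single 2 0 (c * (ζ 0 : ℂ) / (ζ 1 : ℂ)) + lp.single 2 1 μ := by
  refine ext_toFun hζ hlim fun z => ?_
  rw [hT, toFun_single, toFun_pair 0 1 (by norm_num)]
  have h0 : ((ζ 0 : ℂ)) ≠ 0 := by exact_mod_cast (hζ 0).ne'
  have h1 : ((ζ 1 : ℂ)) ≠ 0 := by exact_mod_cast (hζ 1).ne'
  field_simp
  ring

lemma op_apply (hζ : ∀ n, 0 < ζ n)
    (hlim : Tendsto (fun n : ℕ => (ζ n) ^ ((1 : ℝ) / n)) atTop atTop) {μ : ℂ}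
    (hμ : ‖μ‖ ≤ 1) (T : HE ζ →L[ℂ] HE ζ)
    (hT : ∀ f : HE ζ, ∀ z : ℂ, HE.toFun ζ (T f) z = HE.toFun ζ f (μ * z + 0)) (f : HE ζ)
    (n : ℕ) : (T f) n = μ ^ n * f n := by
  have hmem : Memℓp (fun m : ℕ => μ ^ m * f m) 2 := by
    apply memℓp_gen
    have hs := (lp.memℓp f).summable (p := 2) (by norm_num)
    refine hs.of_nonneg_of_le (fun m => by positivity) fun m => ?_
    have hle : ‖μ ^ m * f m‖ ≤ ‖f m‖ := by
      rw [norm_mul, norm_pow]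
      calc ‖μ‖ ^ m * ‖f m‖ ≤ 1 * ‖f m‖ := by
            gcongr
            exact pow_le_one₀ (norm_nonneg μ) hμ
        _ = ‖f m‖ := one_mul _
    exact Real.rpow_le_rpow (norm_nonneg _) hle (by norm_num)
  set w : HE ζ := ⟨fun m : ℕ => μ ^ m * f m, hmem⟩ with hw
  have hTw : T f = w := by
    refine ext_toFun hζ hlim fun z => ?_
    rw [hT]
    unfold HE.toFun HE.coeff
    refine tsum_congr fun m => ?_
    have hwm : (w : ∀ _ : ℕ, ℂ) m = μ ^ m * f m := rfl
    rw [hwm, add_zero, mul_pow]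
    ring
  rw [hTw]

end HEAux

open HEAux
open scoped ComplexInnerProductSpace

/-- For `Φ₁ z = μ z + c` and `Φ₂ z = ν z + d` with `|μ| ≤ 1`, `|ν| ≤ 1` inducing bounded
composition operators on `H_E(ζ)`, one has `C_{Φ₁}* = C_{Φ₂}` iff `c = 0`, `d = 0` and
`conj μ = ν`. -/
theorem adjoint_composition_eq_composition_iff
    (ζ : ℕ → ℝ) (hζ : ∀ n, 0 < ζ n)
    (hlim : Tendsto (fun n : ℕ => (ζ n) ^ ((1 : ℝ) / n)) atTop atTop)
    (μ c ν d : ℂ) (hμ : ‖μ‖ ≤ 1) (hν : ‖ν‖ ≤ 1)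
    (T₁ T₂ : HE ζ →L[ℂ] HE ζ)
    (hT₁ : ∀ f : HE ζ, ∀ z : ℂ, HE.toFun ζ (T₁ f) z = HE.toFun ζ f (μ * z + c))
    (hT₂ : ∀ f : HE ζ, ∀ z : ℂ, HE.toFun ζ (T₂ f) z = HE.toFun ζ f (ν * z + d)) :
    adjoint T₁ = T₂ ↔ c = 0 ∧ d = 0 ∧ conj μ = ν := by
  have h0 : ((ζ 0 : ℂ)) ≠ 0 := by exact_mod_cast (hζ 0).ne'
  have h1 : ((ζ 1 : ℂ)) ≠ 0 := by exact_mod_cast (hζ 1).ne'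
  constructor
  · intro h
    have hadj : ∀ x y : HE ζ, ⟪T₁ x, y⟫ = ⟪x, T₂ y⟫ := fun x y => by
      rw [← h, adjoint_inner_right]
    have hT₁e0 := op_single_zero hζ hlim T₁ hT₁
    have hT₂e0 := op_single_zero hζ hlim T₂ hT₂
    have hT₁e1 := op_single_one hζ hlim T₁ hT₁
    have hT₂e1 := op_single_one hζ hlim T₂ hT₂
    have hap : ∀ (i j : ℕ) (aa : ℂ), j ≠ i → (lp.single 2 i aa : HE ζ) j = 0 :=
      fun i j aa hij => lp.single_apply_ne (E := fun _ : ℕ => ℂ) 2 i aa hij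
    have hself : ∀ (i : ℕ) (aa : ℂ), (lp.single 2 i aa : HE ζ) i = aa :=
      fun i aa => lp.single_apply_self (E := fun _ : ℕ => ℂ) 2 i aa
    have hc : c = 0 := by
      have H := hadj (lp.single 2 1 1) (lp.single 2 0 1)
      rw [hT₁e1, hT₂e0, lp.inner_single_right, lp.inner_single_right] at H
      have e1 : ((lp.single 2 0 (c * (ζ 0 : ℂ) / (ζ 1 : ℂ)) + lp.single 2 1 μ : HE ζ)) 0
          = c * (ζ 0 : ℂ) / (ζ 1 : ℂ) := by
        rw [lp.coeFn_add, Pi.add_apply, hself, hap 1 0 μ (by norm_num), add_zero]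
      have e2 : ((lp.single 2 1 1 : HE ζ)) 0 = 0 := hap 1 0 1 (by norm_num)
      rw [e1, e2, RCLike.inner_apply, RCLike.inner_apply, map_zero, one_mul, mul_zero,
        map_eq_zero] at H
      exact (mul_eq_zero.mp ((div_eq_zero_iff.mp H).resolve_right h1)).resolve_right h0
    have hd : d = 0 := by
      have H := hadj (lp.single 2 0 1) (lp.single 2 1 1)
      rw [hT₁e0, hT₂e1, lp.inner_single_left, lp.inner_single_left] at H
      have e1 : ((lp.single 2 0 (d * (ζ 0 : ℂ) / (ζ 1 : ℂ)) + lp.single 2 1 ν : HE ζ)) 0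
          = d * (ζ 0 : ℂ) / (ζ 1 : ℂ) := by
        rw [lp.coeFn_add, Pi.add_apply, hself, hap 1 0 ν (by norm_num), add_zero]
      have e2 : ((lp.single 2 1 1 : HE ζ)) 0 = 0 := hap 1 0 1 (by norm_num)
      rw [e1, e2, RCLike.inner_apply, RCLike.inner_apply, map_one, mul_one, mul_one,
        eq_comm] at H
      exact (mul_eq_zero.mp ((div_eq_zero_iff.mp H).resolve_right h1)).resolve_right h0
    have hmn : conj μ = ν := by
      have H := hadj (lp.single 2 1 1) (lp.single 2 1 1)
      rw [hT₁e1, hT₂e1, lp.inner_single_right, lp.inner_single_left] at H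
      have e1 : ((lp.single 2 0 (c * (ζ 0 : ℂ) / (ζ 1 : ℂ)) + lp.single 2 1 μ : HE ζ)) 1
          = μ := by
        rw [lp.coeFn_add, Pi.add_apply, hself, hap 0 1 _ (by norm_num), zero_add]
      have e2 : ((lp.single 2 0 (d * (ζ 0 : ℂ) / (ζ 1 : ℂ)) + lp.single 2 1 ν : HE ζ)) 1
          = ν := by
        rw [lp.coeFn_add, Pi.add_apply, hself, hap 0 1 _ (by norm_num), zero_add]
      rw [e1, e2, RCLike.inner_apply, RCLike.inner_apply, map_one, one_mul, mul_one] at H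
      exact H
    exact ⟨hc, hd, hmn⟩
  · rintro ⟨rfl, rfl, hcon⟩
    have hcon' : conj ν = μ := by rw [← hcon, Complex.conj_conj]
    rw [eq_comm, eq_adjoint_iff]
    intro x y
    have hx := op_apply hζ hlim hν T₂ hT₂ x
    have hy := op_apply hζ hlim hμ T₁ hT₁ y
    rw [lp.inner_eq_tsum, lp.inner_eq_tsum]
    refine tsum_congr fun n => ?_
    rw [RCLike.inner_apply, RCLike.inner_apply, hx n, hy n, map_mul, map_pow, hcon']
    ring
end
end

section
/- Let Φ(z) = νz + d for all z ∈ ℂ with |ν| ≤ 1, and suppose the composition operator C_Φ is bounded on H_E(ζ). Then C_Φ is self-adjoint if and only if d = 0 and ν is a real number. -/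
open Filter ContinuousLinearMap
open scoped ComplexConjugate

noncomputable section

private lemma aux_hasFPA (ζ : ℕ → ℝ) (hζ : ∀ n, 0 < ζ n)
    (hlim : Tendsto (fun n : ℕ => (ζ n) ^ ((1 : ℝ) / n)) atTop atTop)
    (a : ℕ → ℂ) (C : ℝ) (ha : ∀ n, ‖a n‖ * ζ n ≤ C) :
    HasFPowerSeriesAt (fun z => ∑' n, a n * z ^ n)
      (FormalMultilinearSeries.ofScalars ℂ a) 0 := by
  have hrad : (FormalMultilinearSeries.ofScalars ℂ a).radius = ⊤ := by
    refine le_antisymm le_top (ENNReal.le_of_forall_nnreal_lt fun r _ => ?_)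
    refine FormalMultilinearSeries.le_radius_of_eventually_le _ C ?_
    have h1 : ∀ᶠ n : ℕ in atTop, (r : ℝ) + 1 ≤ ζ n ^ ((1 : ℝ) / n) :=
      hlim.eventually_ge_atTop _
    filter_upwards [h1, eventually_ge_atTop 1] with n hn hn1
    have hne : (n : ℝ) ≠ 0 := by
      exact_mod_cast Nat.one_le_iff_ne_zero.mp hn1
    have hpow : ((ζ n) ^ ((1 : ℝ) / n)) ^ (n : ℕ) = ζ n := by
      rw [← Real.rpow_natCast ((ζ n) ^ ((1 : ℝ) / (n : ℝ))) n,
        ← Real.rpow_mul (hζ n).le, one_div, inv_mul_cancel₀ hne, Real.rpow_one]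
    have hζn : (r : ℝ) ^ n ≤ ζ n := by
      calc (r : ℝ) ^ n ≤ ((r : ℝ) + 1) ^ n := by
            exact pow_le_pow_left₀ r.coe_nonneg (by linarith) n
        _ ≤ ((ζ n) ^ ((1 : ℝ) / n)) ^ n := by
            exact pow_le_pow_left₀ (by positivity) hn n
        _ = ζ n := hpow
    rw [FormalMultilinearSeries.ofScalars_norm]
    calc ‖a n‖ * (r : ℝ) ^ n ≤ ‖a n‖ * ζ n := by gcongr
      _ ≤ C := ha n
  have h0 : 0 < (FormalMultilinearSeries.ofScalars ℂ a).radius := by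
    rw [hrad]; exact ENNReal.zero_lt_top
  have hball := ((FormalMultilinearSeries.ofScalars ℂ a).hasFPowerSeriesOnBall
    h0).hasFPowerSeriesAt
  have hfun : (FormalMultilinearSeries.ofScalars ℂ a).sum
      = fun z : ℂ => ∑' n, a n * z ^ n := by
    funext z
    exact tsum_congr fun n => by
      rw [FormalMultilinearSeries.ofScalars_apply_eq, smul_eq_mul]
  rwa [hfun] at hball

private lemma aux_coeff_unique (ζ : ℕ → ℝ) (hζ : ∀ n, 0 < ζ n)
    (hlim : Tendsto (fun n : ℕ => (ζ n) ^ ((1 : ℝ) / n)) atTop atTop)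
    (a b : ℕ → ℂ) (Ca Cb : ℝ)
    (ha : ∀ n, ‖a n‖ * ζ n ≤ Ca) (hb : ∀ n, ‖b n‖ * ζ n ≤ Cb)
    (h : ∀ z : ℂ, ∑' n, a n * z ^ n = ∑' n, b n * z ^ n) : a = b := by
  have pa := aux_hasFPA ζ hζ hlim a Ca ha
  have pb := aux_hasFPA ζ hζ hlim b Cb hb
  rw [funext h] at pa
  exact FormalMultilinearSeries.ofScalars_series_injective ℂ ℂ
    (pa.eq_formalMultilinearSeries pb)

private lemma aux_coeff_bound (ζ : ℕ → ℝ) (hζ : ∀ n, 0 < ζ n) (f : HE ζ) (n : ℕ) :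
    ‖HE.coeff ζ f n‖ * ζ n ≤ ‖f‖ := by
  have h2 : (2 : ENNReal) ≠ 0 := by norm_num
  have := lp.norm_apply_le_norm h2 f n
  rw [HE.coeff, norm_div, Complex.norm_real, Real.norm_of_nonneg (hζ n).le,
    div_mul_cancel₀ _ (hζ n).ne']
  exact this

/-- For `Φ z = ν z + d` with `|ν| ≤ 1` inducing a bounded composition operator on `H_E(ζ)`,
`C_Φ` is self-adjoint iff `d = 0` and `ν` is a real number. -/
theorem composition_selfAdjoint_iff
    (ζ : ℕ → ℝ) (hζ : ∀ n, 0 < ζ n)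
    (hlim : Tendsto (fun n : ℕ => (ζ n) ^ ((1 : ℝ) / n)) atTop atTop)
    (ν d : ℂ) (hν : ‖ν‖ ≤ 1)
    (T : HE ζ →L[ℂ] HE ζ)
    (hT : ∀ f : HE ζ, ∀ z : ℂ, HE.toFun ζ (T f) z = HE.toFun ζ f (ν * z + d)) :
    IsSelfAdjoint T ↔ d = 0 ∧ ∃ r : ℝ, ν = (r : ℂ) := by
  have hζne : ∀ n, ((ζ n : ℂ)) ≠ 0 := fun n => by
    exact_mod_cast Complex.ofReal_ne_zero.mpr (hζ n).ne'
  have hc0 : ∀ n, HE.coeff ζ (lp.single 2 0 1 : HE ζ) n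
      = if n = 0 then ((ζ 0 : ℂ))⁻¹ else 0 := by
    intro n
    rcases eq_or_ne n 0 with rfl | hn
    · simp [HE.coeff, lp.single_apply_self, one_div]
    · simp [HE.coeff, lp.single_apply_ne _ _ _ hn, hn]
  have hc1 : ∀ n, HE.coeff ζ (lp.single 2 1 1 : HE ζ) n
      = if n = 1 then ((ζ 1 : ℂ))⁻¹ else 0 := by
    intro n
    rcases eq_or_ne n 1 with rfl | hn
    · simp [HE.coeff, lp.single_apply_self, one_div]
    · simp [HE.coeff, lp.single_apply_ne _ _ _ hn, hn]
  have htf0 : ∀ w : ℂ, HE.toFun ζ (lp.single 2 0 1 : HE ζ) w = ((ζ 0 : ℂ))⁻¹ := by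
    intro w
    rw [HE.toFun, tsum_eq_single 0 (fun n hn => by rw [hc0 n, if_neg hn, zero_mul])]
    rw [hc0 0, if_pos rfl, pow_zero, mul_one]
  have htf1 : ∀ w : ℂ, HE.toFun ζ (lp.single 2 1 1 : HE ζ) w = ((ζ 1 : ℂ))⁻¹ * w := by
    intro w
    rw [HE.toFun, tsum_eq_single 1 (fun n hn => by rw [hc1 n, if_neg hn, zero_mul])]
    rw [hc1 1, if_pos rfl, pow_one]
  constructor
  · -- forward direction
    intro hsa
    have hsym := ContinuousLinearMap.isSelfAdjoint_iff_isSymmetric.mp hsa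
    -- coefficients of T e1
    set b1 : ℕ → ℂ := fun n => if n = 0 then d / (ζ 1 : ℂ)
      else if n = 1 then ν / (ζ 1 : ℂ) else 0 with hb1
    have h0 : (0 : ℝ) ≤ ‖d / (ζ 1 : ℂ)‖ * ζ 0 := mul_nonneg (norm_nonneg _) (hζ 0).le
    have h1' : (0 : ℝ) ≤ ‖ν / (ζ 1 : ℂ)‖ * ζ 1 := mul_nonneg (norm_nonneg _) (hζ 1).le
    have hb1bound : ∀ n, ‖b1 n‖ * ζ n ≤ ‖d / (ζ 1 : ℂ)‖ * ζ 0 + ‖ν / (ζ 1 : ℂ)‖ * ζ 1 := by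
      intro n
      match n with
      | 0 =>
        simp only [hb1, if_pos rfl]
        exact le_add_of_nonneg_right h1'
      | 1 =>
        simp only [hb1, if_neg one_ne_zero, if_pos rfl]
        exact le_add_of_nonneg_left h0
      | (m + 2) =>
        simp only [hb1, if_neg (by omega : ¬(m + 2 = 0)), if_neg (by omega : ¬(m + 2 = 1)),
          norm_zero, zero_mul]
        exact add_nonneg h0 h1'
    have hTe1 : HE.coeff ζ (T (lp.single 2 1 1 : HE ζ)) = b1 := by
      refine aux_coeff_unique ζ hζ hlim _ _ ‖T (lp.single 2 1 1 : HE ζ)‖ _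
        (aux_coeff_bound ζ hζ _) hb1bound fun z => ?_
      have hL : ∑' n, HE.coeff ζ (T (lp.single 2 1 1 : HE ζ)) n * z ^ n
          = HE.toFun ζ (lp.single 2 1 1 : HE ζ) (ν * z + d) := hT _ z
      rw [hL, htf1]
      rw [tsum_eq_sum (s := {0, 1}) (fun n hn => by
        have hn0 : n ≠ 0 := by intro h; subst h; simp at hn
        have hn1 : n ≠ 1 := by intro h; subst h; simp at hn
        simp [hb1, hn0, hn1])]
      rw [Finset.sum_pair (by norm_num : (0 : ℕ) ≠ 1)]
      simp only [hb1, if_pos rfl, if_neg one_ne_zero, if_true, pow_zero, pow_one, mul_one]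
      field_simp
      ring
    set b0 : ℕ → ℂ := fun n => if n = 0 then ((ζ 0 : ℂ))⁻¹ else 0 with hb0
    have hb0bound : ∀ n, ‖b0 n‖ * ζ n ≤ 1 := by
      intro n
      rcases eq_or_ne n 0 with rfl | hn
      · simp only [hb0, if_pos rfl, norm_inv, Complex.norm_real,
          Real.norm_of_nonneg (hζ 0).le]
        rw [inv_mul_cancel₀ (hζ 0).ne']
      · simp [hb0, hn]
    have hTe0 : HE.coeff ζ (T (lp.single 2 0 1 : HE ζ)) = b0 := by
      refine aux_coeff_unique ζ hζ hlim _ _ ‖T (lp.single 2 0 1 : HE ζ)‖ 1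
        (aux_coeff_bound ζ hζ _) hb0bound fun z => ?_
      have hL : ∑' n, HE.coeff ζ (T (lp.single 2 0 1 : HE ζ)) n * z ^ n
          = HE.toFun ζ (lp.single 2 0 1 : HE ζ) (ν * z + d) := hT _ z
      rw [hL, htf0]
      rw [tsum_eq_single 0 (fun n hn => by simp [hb0, hn])]
      simp [hb0]
    -- values of T on basis vectors
    have hTe0_1 : (T (lp.single 2 0 1 : HE ζ) : HE ζ) 1 = 0 := by
      have h := congrFun hTe0 1
      simp only [HE.coeff, hb0] at h
      rw [if_neg one_ne_zero] at h
      exact (div_eq_zero_iff.mp h).resolve_right (hζne 1)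
    have hTe1_0 : (T (lp.single 2 1 1 : HE ζ) : HE ζ) 0 = d * (ζ 0 : ℂ) / (ζ 1 : ℂ) := by
      have h := congrFun hTe1 0
      simp only [HE.coeff, hb1] at h
      rw [if_true] at h
      rw [div_eq_div_iff (hζne 0) (hζne 1)] at h
      rw [eq_div_iff (hζne 1)]
      linear_combination h
    have hTe1_1 : (T (lp.single 2 1 1 : HE ζ) : HE ζ) 1 = ν := by
      have h := congrFun hTe1 1
      simp only [HE.coeff, hb1] at h
      rw [if_neg one_ne_zero, if_true] at h
      rw [div_eq_div_iff (hζne 1) (hζne 1)] at h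
      exact mul_right_cancel₀ (hζne 1) h
    -- symmetry relations
    have h01 := hsym (lp.single 2 0 1 : HE ζ) (lp.single 2 1 1 : HE ζ)
    rw [lp.inner_single_right, lp.inner_single_left] at h01
    simp only [RCLike.inner_apply, map_one, one_mul, mul_one,
      ContinuousLinearMap.coe_coe] at h01
    rw [hTe0_1, hTe1_0, map_zero] at h01
    have hd : d = 0 := by
      have h2 : d * (ζ 0 : ℂ) / (ζ 1 : ℂ) = 0 := h01.symm
      rcases mul_eq_zero.mp ((div_eq_zero_iff.mp h2).resolve_right (hζne 1)) with h | h
      · exact h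
      · exact absurd h (hζne 0)
    have h11 := hsym (lp.single 2 1 1 : HE ζ) (lp.single 2 1 1 : HE ζ)
    rw [lp.inner_single_right, lp.inner_single_left] at h11
    simp only [RCLike.inner_apply, map_one, one_mul, mul_one,
      ContinuousLinearMap.coe_coe] at h11
    rw [hTe1_1] at h11
    exact ⟨hd, Complex.conj_eq_iff_real.mp h11⟩
  · -- reverse direction
    rintro ⟨rfl, r, rfl⟩
    have key : ∀ (f : HE ζ) (n : ℕ), (T f : HE ζ) n = (r : ℂ) ^ n * f n := by
      intro f n
      have hb : ∀ m, ‖(r : ℂ) ^ m * HE.coeff ζ f m‖ * ζ m ≤ ‖f‖ := by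
        intro m
        rw [norm_mul, mul_assoc]
        calc ‖(r : ℂ) ^ m‖ * (‖HE.coeff ζ f m‖ * ζ m)
            ≤ 1 * ‖f‖ := by
              refine mul_le_mul ?_ (aux_coeff_bound ζ hζ f m) ?_ zero_le_one
              · rw [norm_pow]
                exact pow_le_one₀ (norm_nonneg _) hν
              · exact mul_nonneg (norm_nonneg _) (hζ m).le
          _ = ‖f‖ := one_mul _
      have hcoeff : HE.coeff ζ (T f) = fun m => (r : ℂ) ^ m * HE.coeff ζ f m := by
        refine aux_coeff_unique ζ hζ hlim _ _ ‖T f‖ ‖f‖ (aux_coeff_bound ζ hζ (T f))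
          hb fun z => ?_
        have hL : ∑' m, HE.coeff ζ (T f) m * z ^ m = HE.toFun ζ f ((r : ℂ) * z + 0) := hT f z
        rw [hL, add_zero, HE.toFun]
        exact tsum_congr fun m => by rw [mul_pow]; ring
      have h := congrFun hcoeff n
      simp only [HE.coeff] at h
      rw [div_eq_iff (hζne n)] at h
      rw [h, mul_assoc, div_mul_cancel₀ _ (hζne n)]
    rw [ContinuousLinearMap.isSelfAdjoint_iff_isSymmetric]
    intro f g
    rw [lp.inner_eq_tsum, lp.inner_eq_tsum]
    refine tsum_congr fun n => ?_
    simp only [RCLike.inner_apply]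
    show g n * conj ((T f : HE ζ) n) = (T g : HE ζ) n * conj (f n)
    rw [key f n, key g n, map_mul, map_pow, Complex.conj_ofReal]
    ring
end
end

section
/- Let Φ₁(z) = μz + c and Φ₂(z) = νz + d with c, d ∈ ℂ, |μ| ≤ 1 and |ν| ≤ 1, and let Υ₁, Υ₂ be entire functions on ℂ such that C_{Υ₁,Φ₁} and C_{Υ₂,Φ₂} are bounded on H_E(ζ). Then C_{Υ₁,Φ₁}^* = C_{Υ₂,Φ₂} if and only if Υ₁(z) = ζ₀² Υ₁(0) K_{Φ₂(0)}(z) and Υ₂(z) = ζ₀² \overline{Υ₁(0)} K_{Φ₁(0)}(z) for all z ∈ ℂ, and one of the following holds: (i) Υ₁(0) = 0, in which case Υ₁ ≡ 0, Υ₂ ≡ 0 and hence C_{Υ₁,Φ₁} = 0 = C_{Υ₂,Φ₂}; or (ii) Υ₁(0) ≠ 0 and K_z(Φ₂(0)) · K_{Φ₁(z)}(w) = K_{Φ₁(0)}(w) · K_z(Φ₂(w)) for all z, w ∈ ℂ. -/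
open Filter ContinuousLinearMap
open scoped ComplexConjugate

noncomputable section

open scoped ComplexInnerProductSpace

section Aux

variable {ζ : ℕ → ℝ} {K : ℂ → HE ζ}

lemma hzc (hζ : ∀ n, 0 < ζ n) (n : ℕ) : ((ζ n : ℂ)) ≠ 0 := by
  exact_mod_cast (hζ n).ne'

lemma K_apply (hζ : ∀ n, 0 < ζ n) (hK : ∀ p n, HE.coeff ζ (K p) n = (conj p) ^ n / (ζ n : ℂ) ^ 2) (p : ℂ) (n : ℕ) : (K p) n = (conj p) ^ n / (ζ n : ℂ) := by
  have h := hK p n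
  rw [HE.coeff, div_eq_iff (hzc hζ n)] at h
  rw [h, pow_two]
  rw [mul_comm ((ζ n : ℂ)) ((ζ n : ℂ))] -- no-op keep
  rw [div_mul_eq_mul_div, div_eq_div_iff (mul_ne_zero (hzc hζ n) (hzc hζ n)) (hzc hζ n)]
  ring

lemma toFun_eq_inner (hζ : ∀ n, 0 < ζ n) (hK : ∀ p n, HE.coeff ζ (K p) n = (conj p) ^ n / (ζ n : ℂ) ^ 2) (f : HE ζ) (z : ℂ) : HE.toFun ζ f z = ⟪K z, f⟫ := by
  rw [lp.inner_eq_tsum]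
  refine tsum_congr fun n => ?_
  rw [RCLike.inner_apply, K_apply hζ hK, HE.coeff]
  rw [map_div₀, map_pow, Complex.conj_conj, Complex.conj_ofReal]
  ring

lemma toFun_eq_zero (hζ : ∀ n, 0 < ζ n) (hK : ∀ p n, HE.coeff ζ (K p) n = (conj p) ^ n / (ζ n : ℂ) ^ 2) (f : HE ζ) (hf : ∀ z, HE.toFun ζ f z = 0) : f = 0 := by
  set a : ℕ → ℂ := HE.coeff ζ f with ha
  set p : FormalMultilinearSeries ℂ ℂ ℂ :=
    fun n => ContinuousMultilinearMap.mkPiRing ℂ (Fin n) (a n) with hp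
  have hsum : Summable (fun n => ‖p n‖ * ((1 : NNReal) : ℝ) ^ n) := by
    have h2 : Summable fun n => ‖(K 1) n‖ * ‖f n‖ :=
      lp.summable_mul (by rw [Real.holderConjugate_iff]; norm_num) (K 1) f
    refine h2.congr fun n => ?_
    rw [hp]
    rw [ContinuousMultilinearMap.norm_mkPiRing, ha, HE.coeff,
      K_apply hζ hK, norm_div, norm_div]
    simp
    ring
  have hrad : (1 : ENNReal) ≤ p.radius := by
    simpa using p.le_radius_of_summable_norm (r := 1) hsum
  have hpos : 0 < p.radius := lt_of_lt_of_le (by norm_num) hrad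
  have hball := p.hasFPowerSeriesOnBall hpos
  have hsumeq : p.sum = HE.toFun ζ f := by
    funext z
    refine tsum_congr fun n => ?_
    rw [hp]
    simp only [ContinuousMultilinearMap.mkPiRing_apply, Finset.prod_const,
      Finset.card_univ, Fintype.card_fin, smul_eq_mul]
    ring
  have hzero : HasFPowerSeriesAt (0 : ℂ → ℂ) p 0 := by
    have h1 : HasFPowerSeriesAt (HE.toFun ζ f) p 0 := hsumeq ▸ hball.hasFPowerSeriesAt
    rwa [funext hf] at h1
  have hp0 : p = 0 := hzero.eq_zero
  have han : ∀ n, a n = 0 := by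
    intro n
    have h1 : p n = 0 := by rw [hp0]; rfl
    have h2 : (p n) (fun _ => (1 : ℂ)) = 0 := by rw [h1]; simp
    rw [hp] at h2
    simpa using h2
  apply lp.ext
  funext n
  have h3 : f n = a n * ζ n := by
    rw [ha, HE.coeff, div_mul_cancel₀ _ (hzc hζ n)]
  rw [h3, han n, zero_mul]
  simp

lemma op_ext (hζ : ∀ n, 0 < ζ n) (hK : ∀ p n, HE.coeff ζ (K p) n = (conj p) ^ n / (ζ n : ℂ) ^ 2) (A B : HE ζ →L[ℂ] HE ζ) (h : ∀ z, A (K z) = B (K z)) : A = B := by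
  have hd : Dense ((Submodule.span ℂ (Set.range K) : Submodule ℂ (HE ζ)) : Set (HE ζ)) := by
    rw [Submodule.dense_iff_topologicalClosure_eq_top,
      Submodule.topologicalClosure_eq_top_iff, Submodule.eq_bot_iff]
    intro x hx
    refine toFun_eq_zero hζ hK x fun z => ?_
    rw [toFun_eq_inner hζ hK]
    exact (Submodule.mem_orthogonal _ x).mp hx (K z)
      (Submodule.subset_span ⟨z, rfl⟩)
  exact ContinuousLinearMap.ext_on hd (by rintro x ⟨z, rfl⟩; exact h z)

end Aux

/-- For `Φ₁ z = μ z + c`, `Φ₂ z = ν z + d` (`|μ| ≤ 1`, `|ν| ≤ 1`) and entire `Υ₁, Υ₂` with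
`C_{Υ₁,Φ₁}`, `C_{Υ₂,Φ₂}` bounded on `H_E(ζ)`: `C_{Υ₁,Φ₁}* = C_{Υ₂,Φ₂}` iff
`Υ₁ z = ζ₀² Υ₁ 0 · K_{Φ₂ 0} z`, `Υ₂ z = ζ₀² conj (Υ₁ 0) · K_{Φ₁ 0} z`, and either
(i) `Υ₁ 0 = 0`, in which case `Υ₁ ≡ 0`, `Υ₂ ≡ 0` and both operators vanish, or
(ii) `Υ₁ 0 ≠ 0` and `K_z(Φ₂ 0) K_{Φ₁ z}(w) = K_{Φ₁ 0}(w) K_z(Φ₂ w)` for all `z, w`. -/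
theorem adjoint_weighted_composition_eq_weighted_composition_iff
    (ζ : ℕ → ℝ) (hζ : ∀ n, 0 < ζ n)
    (hlim : Tendsto (fun n : ℕ => (ζ n) ^ ((1 : ℝ) / n)) atTop atTop)
    (μ c ν d : ℂ) (hμ : ‖μ‖ ≤ 1) (hν : ‖ν‖ ≤ 1)
    (Υ₁ Υ₂ : ℂ → ℂ) (hΥ₁ : Differentiable ℂ Υ₁) (hΥ₂ : Differentiable ℂ Υ₂)
    (K : ℂ → HE ζ) (hK : ∀ p n, HE.coeff ζ (K p) n = (conj p) ^ n / (ζ n : ℂ) ^ 2)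
    (T₁ T₂ : HE ζ →L[ℂ] HE ζ)
    (hT₁ : ∀ f : HE ζ, ∀ z : ℂ, HE.toFun ζ (T₁ f) z = Υ₁ z * HE.toFun ζ f (μ * z + c))
    (hT₂ : ∀ f : HE ζ, ∀ z : ℂ, HE.toFun ζ (T₂ f) z = Υ₂ z * HE.toFun ζ f (ν * z + d)) :
    adjoint T₁ = T₂ ↔
      ((∀ z : ℂ, Υ₁ z = (ζ 0 : ℂ) ^ 2 * Υ₁ 0 * HE.toFun ζ (K d) z) ∧
       (∀ z : ℂ, Υ₂ z = (ζ 0 : ℂ) ^ 2 * conj (Υ₁ 0) * HE.toFun ζ (K c) z) ∧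
       ((Υ₁ 0 = 0 ∧ (∀ z : ℂ, Υ₁ z = 0) ∧ (∀ z : ℂ, Υ₂ z = 0) ∧ T₁ = 0 ∧ T₂ = 0) ∨
        (Υ₁ 0 ≠ 0 ∧ ∀ z w : ℂ,
          HE.toFun ζ (K z) d * HE.toFun ζ (K (μ * z + c)) w =
            HE.toFun ζ (K c) w * HE.toFun ζ (K z) (ν * w + d)))) := by
  have hE : ∀ (f : HE ζ) (z : ℂ), HE.toFun ζ f z = ⟪K z, f⟫ := toFun_eq_inner hζ hK
  have hsymm : ∀ q p : ℂ, HE.toFun ζ (K q) p = conj (HE.toFun ζ (K p) q) := by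
    intro q p
    rw [hE, hE, ← inner_conj_symm]
  have hinj : ∀ f g : HE ζ, (∀ z, HE.toFun ζ f z = HE.toFun ζ g z) → f = g := by
    intro f g h
    have h0 : ∀ z, HE.toFun ζ (f - g) z = 0 := fun z => by
      rw [hE, inner_sub_right, ← hE, ← hE, h z, sub_self]
    exact sub_eq_zero.mp (toFun_eq_zero hζ hK (f - g) h0)
  have hsmul : ∀ (a : ℂ) (f : HE ζ) (w : ℂ),
      HE.toFun ζ (a • f) w = a * HE.toFun ζ f w := by
    intro a f w; rw [hE, inner_smul_right, ← hE]
  have h0p : ∀ f : HE ζ, HE.toFun ζ f 0 = HE.coeff ζ f 0 := by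
    intro f
    show ∑' n, HE.coeff ζ f n * (0 : ℂ) ^ n = HE.coeff ζ f 0
    rw [tsum_eq_single 0]
    · simp
    · intro n hn; simp [zero_pow hn]
  have hKp0 : ∀ p : ℂ, HE.toFun ζ (K p) 0 = 1 / (ζ 0 : ℂ) ^ 2 := by
    intro p; rw [h0p, hK]; simp
  have hK0w : ∀ w : ℂ, HE.toFun ζ (K 0) w = 1 / (ζ 0 : ℂ) ^ 2 := by
    intro w
    rw [hsymm, hKp0]
    simp [map_div₀, Complex.conj_ofReal]
  have hadj : ∀ z : ℂ, adjoint T₁ (K z) = conj (Υ₁ z) • K (μ * z + c) := by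
    intro z
    apply hinj
    intro w
    calc HE.toFun ζ (adjoint T₁ (K z)) w
        = ⟪K w, adjoint T₁ (K z)⟫ := hE _ _
      _ = ⟪T₁ (K w), K z⟫ := ContinuousLinearMap.adjoint_inner_right _ _ _
      _ = conj ⟪K z, T₁ (K w)⟫ := (inner_conj_symm _ _).symm
      _ = conj (HE.toFun ζ (T₁ (K w)) z) := by rw [hE]
      _ = conj (Υ₁ z * HE.toFun ζ (K w) (μ * z + c)) := by rw [hT₁]
      _ = conj (Υ₁ z) * conj (HE.toFun ζ (K w) (μ * z + c)) := by rw [map_mul]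
      _ = conj (Υ₁ z) * HE.toFun ζ (K (μ * z + c)) w := by
            rw [hsymm w (μ * z + c), Complex.conj_conj]
      _ = HE.toFun ζ (conj (Υ₁ z) • K (μ * z + c)) w := (hsmul _ _ _).symm
  have hiff : adjoint T₁ = T₂ ↔ ∀ z w : ℂ,
      Υ₂ w * HE.toFun ζ (K z) (ν * w + d) =
        conj (Υ₁ z) * HE.toFun ζ (K (μ * z + c)) w := by
    constructor
    · intro h z w
      have h1 : T₂ (K z) = conj (Υ₁ z) • K (μ * z + c) := by rw [← h]; exact hadj z
      have h2 := congrArg (fun f => HE.toFun ζ f w) h1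
      simpa [hT₂, hsmul] using h2
    · intro h
      refine op_ext hζ hK _ _ fun z => ?_
      rw [hadj z]
      apply hinj
      intro w
      rw [hT₂, hsmul]
      exact (h z w).symm
  rw [hiff]
  constructor
  · intro hs
    have h2' : ∀ w, Υ₂ w = (ζ 0 : ℂ) ^ 2 * conj (Υ₁ 0) * HE.toFun ζ (K c) w := by
      intro w
      have h := hs 0 w
      rw [hK0w, mul_zero, zero_add] at h
      rw [mul_one_div, div_eq_iff (pow_ne_zero 2 (hzc hζ 0))] at h
      rw [h]; ring
    have hconj : ∀ z, conj (Υ₁ z) = (ζ 0 : ℂ) ^ 2 * conj (Υ₁ 0) * HE.toFun ζ (K z) d := by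
      intro z
      have h := hs z 0
      rw [mul_zero, zero_add, hKp0, h2' 0, hKp0] at h
      field_simp [hzc hζ 0] at h
      linear_combination -h
    have h1' : ∀ z, Υ₁ z = (ζ 0 : ℂ) ^ 2 * Υ₁ 0 * HE.toFun ζ (K d) z := by
      intro z
      have h := congrArg conj (hconj z)
      rw [Complex.conj_conj] at h
      rw [h, map_mul, map_mul, map_pow, Complex.conj_ofReal, Complex.conj_conj,
        hsymm d z]
    refine ⟨h1', h2', ?_⟩
    by_cases h0 : Υ₁ 0 = 0
    · left
      have hU1 : ∀ z, Υ₁ z = 0 := fun z => by rw [h1' z, h0]; ring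
      have hU2 : ∀ z, Υ₂ z = 0 := fun z => by rw [h2' z, h0]; simp
      refine ⟨h0, hU1, hU2, ?_, ?_⟩
      · refine ContinuousLinearMap.ext fun f => ?_
        rw [ContinuousLinearMap.zero_apply]
        apply hinj
        intro z
        rw [hT₁, hU1 z, zero_mul, hE, inner_zero_right]
      · refine ContinuousLinearMap.ext fun f => ?_
        rw [ContinuousLinearMap.zero_apply]
        apply hinj
        intro z
        rw [hT₂, hU2 z, zero_mul, hE, inner_zero_right]
    · right
      refine ⟨h0, fun z w => ?_⟩
      have h := hs z w
      rw [h2' w, hconj z] at h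
      have hA : (ζ 0 : ℂ) ^ 2 * conj (Υ₁ 0) ≠ 0 :=
        mul_ne_zero (pow_ne_zero 2 (hzc hζ 0)) (by simpa using h0)
      apply mul_left_cancel₀ hA
      linear_combination -h
  · rintro ⟨h1, h2, ⟨h0, hU1, hU2, hT10, hT20⟩ | ⟨hne, hkk⟩⟩ z w
    · rw [hU2 w, hU1 z]; simp
    · have hc : conj (Υ₁ z) = (ζ 0 : ℂ) ^ 2 * conj (Υ₁ 0) * HE.toFun ζ (K z) d := by
        rw [h1 z, map_mul, map_mul, map_pow, Complex.conj_ofReal, hsymm z d]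
      rw [h2 w, hc]
      linear_combination (-(ζ 0 : ℂ) ^ 2 * conj (Υ₁ 0)) * hkk z w
end
end

section
/- Let Φ(z) = νz with |ν| ≤ 1 and let Υ be an entire function on ℂ such that C_{Υ,Φ} is bounded on H_E(ζ). Then C_{Υ,Φ} is self-adjoint if and only if Υ(z) = \overline{Υ(0)} for all z ∈ ℂ and one of the following holds: (i) Υ(0) = 0, in which case Υ ≡ 0 and C_{Υ,Φ} = 0; or (ii) Υ(0) ≠ 0 and ν is a real number. -/
open Filter ContinuousLinearMap
open scoped ComplexConjugate

noncomputable section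

namespace HEaux

variable {ζ : ℕ → ℝ}

lemma zeta_ne (hζ : ∀ n, 0 < ζ n) (n : ℕ) : (ζ n : ℂ) ≠ 0 := by
  exact_mod_cast (hζ n).ne'

lemma one_le_radius (hζ : ∀ n, 0 < ζ n)
    (hlim : Tendsto (fun n : ℕ => (ζ n) ^ ((1 : ℝ) / n)) atTop atTop) (g : HE ζ) :
    1 ≤ (FormalMultilinearSeries.ofScalars ℂ (HE.coeff ζ g)).radius := by
  have h1 : ∀ᶠ n : ℕ in atTop, (1 : ℝ) ≤ ζ n := by
    filter_upwards [hlim.eventually_ge_atTop 1, eventually_ge_atTop 1] with n h hn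
    have hn0 : (n : ℝ) ≠ 0 := by positivity
    have h2 : (1 : ℝ) ≤ (ζ n ^ ((1 : ℝ) / n)) ^ (n : ℕ) := one_le_pow₀ h
    calc (1 : ℝ) ≤ (ζ n ^ ((1 : ℝ) / n)) ^ (n : ℕ) := h2
      _ = ζ n := by
        rw [← Real.rpow_natCast (ζ n ^ ((1 : ℝ) / n)) n, ← Real.rpow_mul (hζ n).le,
          one_div_mul_cancel hn0, Real.rpow_one]
  have := FormalMultilinearSeries.le_radius_of_eventually_le
    (p := FormalMultilinearSeries.ofScalars ℂ (HE.coeff ζ g)) (r := 1) ‖g‖ ?_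
  · simpa using this
  · filter_upwards [h1] with n hn
    rw [FormalMultilinearSeries.ofScalars_norm]
    simp only [NNReal.coe_one, one_pow, mul_one]
    have : ‖HE.coeff ζ g n‖ = ‖g n‖ / ζ n := by
      rw [HE.coeff, norm_div, Complex.norm_real, Real.norm_of_nonneg (hζ n).le]
    rw [this]
    calc ‖g n‖ / ζ n ≤ ‖g n‖ / 1 := by
          exact div_le_div_of_nonneg_left (norm_nonneg _) one_pos hn
      _ = ‖g n‖ := div_one _
      _ ≤ ‖g‖ := lp.norm_apply_le_norm two_ne_zero g n

lemma hasFPS (hζ : ∀ n, 0 < ζ n)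
    (hlim : Tendsto (fun n : ℕ => (ζ n) ^ ((1 : ℝ) / n)) atTop atTop) (g : HE ζ) :
    HasFPowerSeriesAt (HE.toFun ζ g)
      (FormalMultilinearSeries.ofScalars ℂ (HE.coeff ζ g)) 0 := by
  have hr : 0 < (FormalMultilinearSeries.ofScalars ℂ (HE.coeff ζ g)).radius :=
    lt_of_lt_of_le one_pos (one_le_radius hζ hlim g)
  have h := (FormalMultilinearSeries.ofScalars ℂ (HE.coeff ζ g)).hasFPowerSeriesOnBall hr
  have hsum : (FormalMultilinearSeries.ofScalars ℂ (HE.coeff ζ g)).sum = HE.toFun ζ g := by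
    funext x
    refine tsum_congr fun n => ?_
    rw [FormalMultilinearSeries.ofScalars_apply_eq, smul_eq_mul]
  rw [hsum] at h
  exact h.hasFPowerSeriesAt

lemma toFun_injective (hζ : ∀ n, 0 < ζ n)
    (hlim : Tendsto (fun n : ℕ => (ζ n) ^ ((1 : ℝ) / n)) atTop atTop) {g h : HE ζ}
    (heq : ∀ z, HE.toFun ζ g z = HE.toFun ζ h z) : g = h := by
  have h1 := hasFPS hζ hlim g
  have h2 := hasFPS hζ hlim h
  rw [show HE.toFun ζ g = HE.toFun ζ h from funext heq] at h1
  have h3 := h1.eq_formalMultilinearSeries h2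
  have hc : HE.coeff ζ g = HE.coeff ζ h :=
    FormalMultilinearSeries.ofScalars_series_injective ℂ ℂ h3
  apply lp.ext
  funext n
  have h4 := congrFun hc n
  rw [HE.coeff, HE.coeff] at h4
  have := congrArg (· * (ζ n : ℂ)) h4
  simpa [div_mul_cancel₀, zeta_ne hζ n] using this

lemma toFun_single (hζ : ∀ n, 0 < ζ n) (k : ℕ) (a : ℂ) (z : ℂ) :
    HE.toFun ζ (lp.single 2 k a) z = a / (ζ k : ℂ) * z ^ k := by
  rw [HE.toFun]
  rw [tsum_eq_single k]
  · rw [HE.coeff, lp.single_apply_self]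
  · intro n hn
    rw [HE.coeff, lp.single_apply_ne _ _ _ hn, zero_div, zero_mul]

lemma toFun_at_zero (g : HE ζ) : HE.toFun ζ g 0 = HE.coeff ζ g 0 := by
  rw [HE.toFun]
  rw [tsum_eq_single 0]
  · simp
  · intro n hn
    simp [zero_pow hn]

end HEaux

/-- For `Φ z = ν z` with `|ν| ≤ 1` and entire `Υ` with `C_{Υ,Φ}` bounded on `H_E(ζ)`:
`C_{Υ,Φ}` is self-adjoint iff `Υ z = conj (Υ 0)` for all `z`, and either (i) `Υ 0 = 0`,
in which case `Υ ≡ 0` and `C_{Υ,Φ} = 0`, or (ii) `Υ 0 ≠ 0` and `ν` is real. -/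
theorem weighted_composition_selfAdjoint_iff_linear_symbol
    (ζ : ℕ → ℝ) (hζ : ∀ n, 0 < ζ n)
    (hlim : Tendsto (fun n : ℕ => (ζ n) ^ ((1 : ℝ) / n)) atTop atTop)
    (ν : ℂ) (hν : ‖ν‖ ≤ 1)
    (Υ : ℂ → ℂ) (hΥ : Differentiable ℂ Υ)
    (T : HE ζ →L[ℂ] HE ζ)
    (hT : ∀ f : HE ζ, ∀ z : ℂ, HE.toFun ζ (T f) z = Υ z * HE.toFun ζ f (ν * z)) :
    IsSelfAdjoint T ↔
      ((∀ z : ℂ, Υ z = conj (Υ 0)) ∧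
       ((Υ 0 = 0 ∧ (∀ z : ℂ, Υ z = 0) ∧ T = 0) ∨
        (Υ 0 ≠ 0 ∧ ∃ r : ℝ, ν = (r : ℂ)))) := by
  have hζc : ∀ n, (ζ n : ℂ) ≠ 0 := HEaux.zeta_ne hζ
  have hinj := fun {g h : HE ζ} => HEaux.toFun_injective hζ hlim (g := g) (h := h)
  constructor
  · intro hsa
    have hsymm := (ContinuousLinearMap.isSelfAdjoint_iff_isSymmetric).mp hsa
    -- Step 1: (T (single k 1)) 0 = 0 for k ≠ 0
    have h1 : ∀ k : ℕ, k ≠ 0 → (T (lp.single 2 k (1 : ℂ))) 0 = 0 := by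
      intro k hk
      have h0 := HEaux.toFun_at_zero (ζ := ζ) (T (lp.single 2 k (1 : ℂ)))
      rw [hT _ 0, mul_zero, HEaux.toFun_at_zero] at h0
      have hek : HE.coeff ζ (lp.single 2 k (1 : ℂ)) 0 = 0 := by
        rw [HE.coeff, lp.single_apply_ne _ _ _ (Ne.symm hk), zero_div]
      rw [hek, mul_zero] at h0
      have h0' := h0.symm
      rw [HE.coeff, div_eq_zero_iff] at h0'
      exact h0'.resolve_right (hζc 0)
    -- Step 2: (T (single 0 1)) k = 0 for k ≠ 0
    have h2 : ∀ k : ℕ, k ≠ 0 → (T (lp.single 2 0 (1 : ℂ))) k = 0 := by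
      intro k hk
      have hs := hsymm (lp.single 2 0 (1 : ℂ)) (lp.single 2 k (1 : ℂ))
      simp only [ContinuousLinearMap.coe_coe] at hs
      rw [lp.inner_single_right, lp.inner_single_left] at hs
      rw [RCLike.inner_apply, RCLike.inner_apply] at hs
      simp only [map_one, one_mul, mul_one] at hs
      rw [h1 k hk] at hs
      exact star_eq_zero.mp hs
    -- Step 3: Υ z = (T (single 0 1)) 0 for all z
    have h3 : ∀ z : ℂ, Υ z = (T (lp.single 2 0 (1 : ℂ))) 0 := by
      intro z
      have hfz : HE.toFun ζ (T (lp.single 2 0 (1 : ℂ))) z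
          = (T (lp.single 2 0 (1 : ℂ))) 0 / (ζ 0 : ℂ) := by
        rw [HE.toFun, tsum_eq_single 0]
        · simp [HE.coeff]
        · intro n hn
          rw [HE.coeff, h2 n hn, zero_div, zero_mul]
      have h5 := hT (lp.single 2 0 (1 : ℂ)) z
      rw [hfz, HEaux.toFun_single hζ] at h5
      simp only [pow_zero, mul_one] at h5
      have h6 := congrArg (· * (ζ 0 : ℂ)) h5
      simp only [div_mul_cancel₀ _ (hζc 0), mul_assoc, one_div,
        inv_mul_cancel₀ (hζc 0), mul_one] at h6
      exact h6.symm
    -- Step 4: realness of d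
    have h4 : conj ((T (lp.single 2 0 (1 : ℂ))) 0) = (T (lp.single 2 0 (1 : ℂ))) 0 := by
      have hs := hsymm (lp.single 2 0 (1 : ℂ)) (lp.single 2 0 (1 : ℂ))
      simp only [ContinuousLinearMap.coe_coe] at hs
      rw [lp.inner_single_right, lp.inner_single_left] at hs
      rw [RCLike.inner_apply, RCLike.inner_apply] at hs
      simpa using hs
    set d : ℂ := (T (lp.single 2 0 (1 : ℂ))) 0 with hd
    have hU0 : Υ 0 = d := h3 0
    have hconst : ∀ z : ℂ, Υ z = conj (Υ 0) := by
      intro z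
      rw [h3 z, hU0, h4]
    refine ⟨hconst, ?_⟩
    by_cases hd0 : d = 0
    · left
      have hz : ∀ z, Υ z = 0 := fun z => (h3 z).trans hd0
      refine ⟨by rw [hU0, hd0], hz, ?_⟩
      ext f n
      have hf0 : T f = (0 : HE ζ) := by
        apply hinj
        intro z
        rw [hT f z, hz z, zero_mul, HE.toFun]
        simp [HE.coeff]
      rw [hf0]
      simp
    · right
      refine ⟨by rw [hU0]; exact hd0, ?_⟩
      have hTe1 : T (lp.single 2 1 (1 : ℂ)) = lp.single 2 1 (d * ν) := by
        apply hinj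
        intro z
        rw [hT _ z, h3 z, HEaux.toFun_single hζ, HEaux.toFun_single hζ]
        ring
      have hs := hsymm (lp.single 2 1 (1 : ℂ)) (lp.single 2 1 (1 : ℂ))
      simp only [ContinuousLinearMap.coe_coe] at hs
      rw [hTe1] at hs
      rw [lp.inner_single_right, lp.inner_single_left] at hs
      rw [RCLike.inner_apply, RCLike.inner_apply] at hs
      rw [lp.single_apply_self] at hs
      simp only [map_one, one_mul, mul_one] at hs
      have hν' : conj ν = ν := by
        have hdd : d * conj ν = d * ν := by
          calc d * conj ν = conj d * conj ν := by rw [show conj d = d from h4]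
            _ = d * ν := by rw [← map_mul]; exact hs
        exact mul_left_cancel₀ hd0 hdd
      exact ⟨ν.re, (Complex.conj_eq_iff_re.mp hν').symm⟩
  · rintro ⟨hconst, hcase⟩
    rcases hcase with ⟨-, -, hT0⟩ | ⟨hd0, r, hr⟩
    · rw [hT0]
      exact .zero _
    · rw [ContinuousLinearMap.isSelfAdjoint_iff_isSymmetric]
      have hdreal : conj (Υ 0) = Υ 0 := (hconst 0).symm
      have hνreal : conj ν = ν := by rw [hr, Complex.conj_ofReal]
      set d : ℂ := Υ 0 with hd
      have hTf : ∀ (f : HE ζ) (n : ℕ), (T f) n = d * ν ^ n * f n := by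
        intro f
        have hm : Memℓp (fun n => d * ν ^ n * f n) 2 := by
          apply memℓp_gen
          have hs : Summable fun n : ℕ =>
              ‖d‖ ^ (2 : ENNReal).toReal * ‖f n‖ ^ (2 : ENNReal).toReal :=
            ((lp.memℓp f).summable (by norm_num)).mul_left _
          refine hs.of_nonneg_of_le (fun n => Real.rpow_nonneg (norm_nonneg _) _) fun n => ?_
          rw [← Real.mul_rpow (norm_nonneg _) (norm_nonneg _)]
          apply Real.rpow_le_rpow (norm_nonneg _) ?_ (by norm_num)
          calc ‖d * ν ^ n * f n‖ = ‖d‖ * ‖ν‖ ^ n * ‖f n‖ := by rw [norm_mul, norm_mul, norm_pow]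
            _ ≤ ‖d‖ * 1 * ‖f n‖ := by
                gcongr
                exact pow_le_one₀ (norm_nonneg _) hν
            _ = ‖d‖ * ‖f n‖ := by ring
        have heq : T f = (⟨fun n => d * ν ^ n * f n, hm⟩ : lp (fun _ : ℕ => ℂ) 2) := by
          apply hinj
          intro z
          rw [hT f z, hconst z, hdreal, HE.toFun, HE.toFun, ← tsum_mul_left]
          refine tsum_congr fun n => ?_
          rw [HE.coeff, HE.coeff]
          show d * (f n / (ζ n : ℂ) * (ν * z) ^ n)
              = d * ν ^ n * f n / (ζ n : ℂ) * z ^ n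
          rw [mul_pow]
          ring
        intro n
        rw [heq]
      intro f g
      simp only [ContinuousLinearMap.coe_coe]
      rw [lp.inner_eq_tsum, lp.inner_eq_tsum]
      refine tsum_congr fun n => ?_
      rw [RCLike.inner_apply, RCLike.inner_apply, hTf f n, hTf g n]
      rw [map_mul, map_mul, map_pow, hνreal, hdreal]
      ring
end
end

section
/- Let Φ(z) = νz + d with ν ≠ 0, d ≠ 0 and |ν| ≤ 1, and let Υ be an entire function on ℂ such that C_{Υ,Φ} is bounded on H_E(ζ). If C_{Υ,Φ} is self-adjoint, then Υ(z) = α K_{Φ(0)}(z) for all z ∈ ℂ, where α = ζ₀² \overline{Υ(0)} is a real number, and one of the following holds: (i) Υ(0) = 0, in which case Υ ≡ 0 and C_{Υ,Φ} = 0; or (ii) Υ(0) ≠ 0 and ν is a real number. -/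
open Filter ContinuousLinearMap
open scoped ComplexConjugate

noncomputable section

/-- Growth of the weights: eventually `R ^ n ≤ ζ n`. -/
lemma aux_zeta_ge (ζ : ℕ → ℝ) (hζ : ∀ n, 0 < ζ n)
    (hlim : Tendsto (fun n : ℕ => (ζ n) ^ ((1 : ℝ) / n)) atTop atTop)
    (R : ℝ) (hR : 0 ≤ R) : ∀ᶠ n in atTop, R ^ n ≤ ζ n := by
  filter_upwards [hlim.eventually_ge_atTop R, eventually_ge_atTop 1] with n hn hn1
  have hnz : (n : ℝ) ≠ 0 := Nat.cast_ne_zero.mpr (by omega)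
  have h1 : ((ζ n) ^ ((1 : ℝ) / n)) ^ (n : ℕ) = ζ n := by
    rw [← Real.rpow_natCast ((ζ n) ^ ((1 : ℝ) / n)) n, ← Real.rpow_mul (hζ n).le,
      one_div, inv_mul_cancel₀ hnz, Real.rpow_one]
  calc R ^ n ≤ ((ζ n) ^ ((1 : ℝ) / n)) ^ n := pow_le_pow_left₀ hR hn n
    _ = ζ n := h1

/-- Coefficient sequences bounded by `M / ζ n` have entire generating functions. -/
lemma aux_summable_norm (ζ : ℕ → ℝ) (hζ : ∀ n, 0 < ζ n)
    (hlim : Tendsto (fun n : ℕ => (ζ n) ^ ((1 : ℝ) / n)) atTop atTop)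
    (c : ℕ → ℂ) (M : ℝ) (hc : ∀ n, ‖c n‖ ≤ M / ζ n) (r : ℝ) (hr : 0 ≤ r) :
    Summable fun n => ‖c n‖ * r ^ n := by
  have hM : 0 ≤ M := by
    have h0 := (norm_nonneg (c 0)).trans (hc 0)
    have := (div_nonneg_iff.mp h0)
    rcases this with h | h
    · exact h.1
    · linarith [(hζ 0), h.2]
  have hRpos : (0 : ℝ) < 2 * (r + 1) := by linarith
  have hev := aux_zeta_ge ζ hζ hlim (2 * (r + 1)) hRpos.le
  have hgeo : Summable fun n : ℕ => M * (1 / 2 : ℝ) ^ n := summable_geometric_two.mul_left M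
  apply Summable.of_norm_bounded_eventually_nat hgeo
  filter_upwards [hev] with n hn
  have hζn := hζ n
  have hpow : (0 : ℝ) < (2 * (r + 1)) ^ n := pow_pos hRpos n
  have h1 : ‖c n‖ * r ^ n ≤ (M / ζ n) * r ^ n :=
    mul_le_mul_of_nonneg_right (hc n) (pow_nonneg hr n)
  have h2 : (M / ζ n) * r ^ n ≤ (M / (2 * (r + 1)) ^ n) * r ^ n := by
    apply mul_le_mul_of_nonneg_right _ (pow_nonneg hr n)
    exact div_le_div_of_nonneg_left hM hpow hn |>.trans_eq rfl
  have h3 : (M / (2 * (r + 1)) ^ n) * r ^ n = M * (r / (2 * (r + 1))) ^ n := by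
    rw [div_pow]; ring
  have h4 : (r / (2 * (r + 1))) ^ n ≤ (1 / 2 : ℝ) ^ n := by
    apply pow_le_pow_left₀ (div_nonneg hr hRpos.le)
    rw [div_le_div_iff₀ hRpos (by norm_num)]
    linarith
  have h5 : ‖‖c n‖ * r ^ n‖ = ‖c n‖ * r ^ n := by
    rw [Real.norm_eq_abs, abs_of_nonneg (mul_nonneg (norm_nonneg _) (pow_nonneg hr n))]
  rw [h5]
  calc ‖c n‖ * r ^ n ≤ M * (r / (2 * (r + 1))) ^ n := by
        rw [← h3]; exact h1.trans h2
    _ ≤ M * (1 / 2 : ℝ) ^ n := mul_le_mul_of_nonneg_left h4 hM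

lemma aux_summable_coeff (ζ : ℕ → ℝ) (hζ : ∀ n, 0 < ζ n)
    (hlim : Tendsto (fun n : ℕ => (ζ n) ^ ((1 : ℝ) / n)) atTop atTop)
    (g : HE ζ) (r : ℝ) (hr : 0 ≤ r) :
    Summable fun n => ‖HE.coeff ζ g n‖ * r ^ n := by
  apply aux_summable_norm ζ hζ hlim _ ‖g‖ _ r hr
  intro n
  rw [HE.coeff, norm_div, Complex.norm_real, Real.norm_eq_abs, abs_of_pos (hζ n)]
  gcongr
  · exact (hζ n).le
  · exact lp.norm_apply_le_norm two_ne_zero g n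

/-- Uniqueness of Taylor coefficients for entire sums. -/
lemma aux_coeff_ext (c c' : ℕ → ℂ)
    (hc : ∀ r : ℝ, 0 ≤ r → Summable fun n => ‖c n‖ * r ^ n)
    (hc' : ∀ r : ℝ, 0 ≤ r → Summable fun n => ‖c' n‖ * r ^ n)
    (h : ∀ z : ℂ, ∑' n, c n * z ^ n = ∑' n, c' n * z ^ n) : c = c' := by
  set b : ℕ → ℂ := fun n => c n - c' n with hb
  set p := FormalMultilinearSeries.ofScalars ℂ b with hp
  have hsum : ∀ z : ℂ, Summable fun n => c n * z ^ n := fun z =>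
    Summable.of_norm (by simpa [norm_mul, norm_pow] using hc ‖z‖ (norm_nonneg z))
  have hsum' : ∀ z : ℂ, Summable fun n => c' n * z ^ n := fun z =>
    Summable.of_norm (by simpa [norm_mul, norm_pow] using hc' ‖z‖ (norm_nonneg z))
  have hrad : p.radius = ⊤ := by
    apply FormalMultilinearSeries.radius_eq_top_of_summable_norm
    intro r
    have hs : Summable fun n => (‖c n‖ + ‖c' n‖) * (r : ℝ) ^ n := by
      simpa [add_mul] using (hc r r.coe_nonneg).add (hc' r r.coe_nonneg)
    apply Summable.of_nonneg_of_le _ _ hs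
    · intro n; positivity
    · intro n
      have hn : ‖p n‖ = ‖b n‖ := FormalMultilinearSeries.ofScalars_norm ℂ b n
      rw [hn]
      exact mul_le_mul_of_nonneg_right (norm_sub_le _ _) (pow_nonneg r.coe_nonneg n)
  have hzero : p.sum = 0 := by
    funext z
    have h1 : p.sum z = ∑' n, b n * z ^ n := by
      rw [FormalMultilinearSeries.sum]
      exact tsum_congr fun n => by
        rw [FormalMultilinearSeries.ofScalars_apply_eq, smul_eq_mul]
    rw [h1]
    have h2 : ∀ n, b n * z ^ n = c n * z ^ n - c' n * z ^ n := fun n => by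
      rw [hb]; ring
    rw [tsum_congr h2, Summable.tsum_sub (hsum z) (hsum' z), h z, sub_self, Pi.zero_apply]
  have hball : HasFPowerSeriesAt p.sum p 0 :=
    (p.hasFPowerSeriesOnBall (by rw [hrad]; exact ENNReal.zero_lt_top)).hasFPowerSeriesAt
  rw [hzero] at hball
  have hb0 : b = 0 := (FormalMultilinearSeries.ofScalars_series_eq_zero ℂ).mp hball.eq_zero
  funext n
  have := congrFun hb0 n
  simp only [hb, Pi.zero_apply, sub_eq_zero] at this
  exact this

/-- For `Φ z = ν z + d` with `ν ≠ 0`, `d ≠ 0`, `|ν| ≤ 1` and entire `Υ` with `C_{Υ,Φ}`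
bounded on `H_E(ζ)`: if `C_{Υ,Φ}` is self-adjoint then `Υ z = α K_{Φ 0} z` where
`α = ζ₀² conj (Υ 0)` is real, and either (i) `Υ 0 = 0`, whence `Υ ≡ 0` and `C_{Υ,Φ} = 0`,
or (ii) `Υ 0 ≠ 0` and `ν` is real. -/
theorem weighted_composition_selfAdjoint_necessary
    (ζ : ℕ → ℝ) (hζ : ∀ n, 0 < ζ n)
    (hlim : Tendsto (fun n : ℕ => (ζ n) ^ ((1 : ℝ) / n)) atTop atTop)
    (ν d : ℂ) (hν0 : ν ≠ 0) (hd : d ≠ 0) (hν : ‖ν‖ ≤ 1)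
    (Υ : ℂ → ℂ) (hΥ : Differentiable ℂ Υ)
    (K : ℂ → HE ζ) (hK : ∀ p n, HE.coeff ζ (K p) n = (conj p) ^ n / (ζ n : ℂ) ^ 2)
    (T : HE ζ →L[ℂ] HE ζ)
    (hT : ∀ f : HE ζ, ∀ z : ℂ, HE.toFun ζ (T f) z = Υ z * HE.toFun ζ f (ν * z + d)) :
    IsSelfAdjoint T →
      ((∀ z : ℂ, Υ z = (ζ 0 : ℂ) ^ 2 * conj (Υ 0) * HE.toFun ζ (K d) z) ∧
       (∃ r : ℝ, (ζ 0 : ℂ) ^ 2 * conj (Υ 0) = (r : ℂ)) ∧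
       ((Υ 0 = 0 ∧ (∀ z : ℂ, Υ z = 0) ∧ T = 0) ∨
        (Υ 0 ≠ 0 ∧ ∃ r : ℝ, ν = (r : ℂ)))) := by
  intro hsa
  have hsym := hsa.isSymmetric
  have hζC : ∀ n, (ζ n : ℂ) ≠ 0 := fun n => by
    exact_mod_cast (hζ n).ne'
  set e : ℕ → HE ζ := fun n => lp.single 2 n 1 with he
  have happly : ∀ (f : HE ζ) (n : ℕ), f n = HE.coeff ζ f n * ζ n := fun f n => by
    rw [HE.coeff, div_mul_cancel₀ _ (hζC n)]
  have he_apply : ∀ n k, (e n : ∀ _ : ℕ, ℂ) k = if k = n then 1 else 0 := by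
    intro n k
    rw [he]
    simp only
    rw [lp.single_apply]
    split_ifs with h
    · subst h; simp
    · simp [Pi.single_apply, h]
  have htoFun_e : ∀ n (z : ℂ), HE.toFun ζ (e n) z = z ^ n / ζ n := by
    intro n z
    rw [HE.toFun]
    rw [tsum_eq_single n (fun m hm => by
      rw [HE.coeff, he_apply, if_neg hm, zero_div, zero_mul])]
    rw [HE.coeff, he_apply, if_pos rfl]
    ring
  have htoFun_zero : ∀ f : HE ζ, HE.toFun ζ f 0 = HE.coeff ζ f 0 := by
    intro f
    rw [HE.toFun, tsum_eq_single 0 (fun m hm => by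
      rw [zero_pow hm, mul_zero])]
    rw [pow_zero, mul_one]
  set u : ℕ → ℂ := fun m => (ζ 0 : ℂ) * HE.coeff ζ (T (e 0)) m with hu
  have hΥ_eq : ∀ z : ℂ, Υ z = ∑' m, u m * z ^ m := by
    intro z
    have h1 := hT (e 0) z
    rw [htoFun_e 0 (ν * z + d), pow_zero] at h1
    have h2 : (∑' m, u m * z ^ m) = (ζ 0 : ℂ) * HE.toFun ζ (T (e 0)) z := by
      rw [HE.toFun, ← tsum_mul_left]
      exact tsum_congr fun m => by rw [hu]; ring
    rw [h2, h1, mul_one_div, mul_comm ((ζ 0 : ℂ)) _, div_mul_cancel₀ _ (hζC 0)]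
  have hA1 : ∀ m, HE.coeff ζ (T (e m)) 0 = Υ 0 * d ^ m / ζ m := by
    intro m
    rw [← htoFun_zero (T (e m)), hT (e m) 0, htoFun_e m (ν * 0 + d), mul_zero, zero_add,
      mul_div_assoc]
  -- the key self-adjointness relation in row/column 0
  have hrel0 : ∀ m, u m = (ζ 0 : ℂ) ^ 2 * conj (Υ 0) * (conj d) ^ m / (ζ m : ℂ) ^ 2 := by
    intro m
    have h := hsym (e m) (e 0)
    simp only [ContinuousLinearMap.coe_coe] at h
    rw [he] at h
    rw [lp.inner_single_right, lp.inner_single_left] at h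
    rw [RCLike.inner_apply, RCLike.inner_apply, map_one, one_mul, mul_one] at h
    rw [← he] at h
    rw [happly (T (e m)) 0, hA1 m, happly (T (e 0)) m] at h
    simp only [map_mul, map_div₀, map_pow, Complex.conj_ofReal] at h
    have hm := hζC m
    have h0 := hζC 0
    field_simp at h
    show (ζ 0 : ℂ) * HE.coeff ζ (T (e 0)) m = _
    rw [eq_div_iff (pow_ne_zero 2 hm), pow_two]
    linear_combination (-(ζ 0 : ℂ)) * h
  have hclaim1 : ∀ z : ℂ, Υ z = (ζ 0 : ℂ) ^ 2 * conj (Υ 0) * HE.toFun ζ (K d) z := by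
    intro z
    rw [hΥ_eq z, HE.toFun, ← tsum_mul_left]
    exact tsum_congr fun m => by rw [hrel0 m, hK d m]; ring
  have hu0 : u 0 = Υ 0 := by
    rw [hu]
    simp only
    rw [hA1 0, pow_zero, mul_one, mul_comm]
    exact div_mul_cancel₀ _ (hζC 0)
  have hconj : conj (Υ 0) = Υ 0 := by
    have h := hrel0 0
    rw [hu0, pow_zero, mul_one, mul_div_cancel_left₀ _ (pow_ne_zero 2 (hζC 0))] at h
    exact h.symm
  have hreal : ∃ r : ℝ, (ζ 0 : ℂ) ^ 2 * conj (Υ 0) = (r : ℂ) := by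
    obtain ⟨r0, hr0⟩ := Complex.conj_eq_iff_real.mp hconj
    exact ⟨ζ 0 ^ 2 * r0, by rw [hconj, hr0]; push_cast; ring⟩
  refine ⟨hclaim1, hreal, ?_⟩
  by_cases h0 : Υ 0 = 0
  · -- case (i)
    left
    have hΥ0 : ∀ z : ℂ, Υ z = 0 := fun z => by
      rw [hclaim1 z, h0, map_zero, mul_zero, zero_mul]
    refine ⟨h0, hΥ0, ?_⟩
    refine ContinuousLinearMap.ext fun f => ?_
    refine lp.ext (funext fun n => ?_)
    have hco : HE.coeff ζ (T f) = fun _ => (0 : ℂ) := by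
      apply aux_coeff_ext
      · exact fun r hr => aux_summable_coeff ζ hζ hlim (T f) r hr
      · intro r hr; simpa using summable_zero
      · intro z
        have h1 := hT f z
        rw [hΥ0 z, zero_mul] at h1
        rw [HE.toFun] at h1
        rw [h1]
        simp
    have h2 : (T f) n = HE.coeff ζ (T f) n * ζ n := happly (T f) n
    rw [h2, hco]
    simp
  · -- case (ii)
    right
    refine ⟨h0, ?_⟩
    -- summability of the coefficients of Υ
    have hu_sum : ∀ r : ℝ, 0 ≤ r → Summable fun m => ‖u m‖ * r ^ m := by
      intro r hr
      have h1 := (aux_summable_coeff ζ hζ hlim (T (e 0)) r hr).mul_left (ζ 0)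
      apply h1.congr
      intro m
      rw [hu]
      simp only
      rw [norm_mul, Complex.norm_real, Real.norm_eq_abs, abs_of_pos (hζ 0)]
      ring
    -- the shifted coefficient sequence of z ↦ Υ z * (ν z + d) / ζ 1
    set v : ℕ → ℂ := fun m =>
      (ν * (if m = 0 then 0 else u (m - 1)) + d * u m) / ζ 1 with hv
    have hv_succ : ∀ m : ℕ, v (m + 1) = (ν * u m + d * u (m + 1)) / ζ 1 := by
      intro m
      rw [hv]
      simp
    have hv_sum : ∀ r : ℝ, 0 ≤ r → Summable fun m => ‖v m‖ * r ^ m := by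
      intro r hr
      have h1 : Summable fun m => (‖ν‖ * r / ζ 1) * (‖u m‖ * r ^ m) :=
        (hu_sum r hr).mul_left _
      have h2 : Summable fun m => (‖d‖ / ζ 1) * (‖u (m + 1)‖ * r ^ (m + 1)) :=
        (((summable_nat_add_iff 1).mpr (hu_sum r hr))).mul_left _
      have h3 := h1.add h2
      rw [← summable_nat_add_iff 1]
      apply Summable.of_nonneg_of_le _ _ h3
      · intro m; positivity
      · intro m
        rw [hv_succ m]
        have hb : ‖(ν * u m + d * u (m + 1)) / (ζ 1 : ℂ)‖
            ≤ (‖ν‖ * ‖u m‖ + ‖d‖ * ‖u (m + 1)‖) / ζ 1 := by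
          rw [norm_div, Complex.norm_real, Real.norm_eq_abs, abs_of_pos (hζ 1)]
          gcongr
          · exact (hζ 1).le
          calc ‖ν * u m + d * u (m + 1)‖ ≤ ‖ν * u m‖ + ‖d * u (m + 1)‖ := norm_add_le _ _
            _ = ‖ν‖ * ‖u m‖ + ‖d‖ * ‖u (m + 1)‖ := by rw [norm_mul ν (u m), norm_mul d (u (m + 1))]
        calc ‖(ν * u m + d * u (m + 1)) / (ζ 1 : ℂ)‖ * r ^ (m + 1)
            ≤ ((‖ν‖ * ‖u m‖ + ‖d‖ * ‖u (m + 1)‖) / ζ 1) * r ^ (m + 1) :=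
              mul_le_mul_of_nonneg_right hb (pow_nonneg hr _)
          _ = (‖ν‖ * r / ζ 1) * (‖u m‖ * r ^ m) + (‖d‖ / ζ 1) * (‖u (m + 1)‖ * r ^ (m + 1)) := by
              rw [pow_succ]
              field_simp
    have hsu : ∀ z : ℂ, Summable fun m => u m * z ^ m := fun z =>
      Summable.of_norm (by simpa [norm_mul, norm_pow] using hu_sum ‖z‖ (norm_nonneg z))
    have hv_tsum : ∀ z : ℂ, ∑' m, v m * z ^ m = Υ z * (ν * z + d) / ζ 1 := by
      intro z
      have hsv : Summable fun m => v m * z ^ m :=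
        Summable.of_norm (by simpa [norm_mul, norm_pow] using hv_sum ‖z‖ (norm_nonneg z))
      rw [Summable.tsum_eq_zero_add hsv]
      have e1 : ∀ m : ℕ, v (m + 1) * z ^ (m + 1)
          = (ν * z / ζ 1) * (u m * z ^ m) + (d / ζ 1) * (u (m + 1) * z ^ (m + 1)) := by
        intro m
        rw [hv_succ m, pow_succ]
        field_simp
      rw [tsum_congr e1, Summable.tsum_add ((hsu z).mul_left _)
        (((summable_nat_add_iff 1).mpr (hsu z)).mul_left _), tsum_mul_left, tsum_mul_left]
      have e2 : ∑' m : ℕ, u (m + 1) * z ^ (m + 1) = (∑' m, u m * z ^ m) - u 0 := by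
        rw [Summable.tsum_eq_zero_add (hsu z), pow_zero, mul_one]
        ring
      rw [e2, ← hΥ_eq z]
      have hv0 : v 0 = d * u 0 / ζ 1 := by rw [hv]; simp
      rw [hv0, pow_zero, mul_one]
      field_simp
      ring
    have hcoeff1 : HE.coeff ζ (T (e 1)) = v := by
      apply aux_coeff_ext
      · exact fun r hr => aux_summable_coeff ζ hζ hlim (T (e 1)) r hr
      · exact fun r hr => hv_sum r hr
      · intro z
        have h1 := hT (e 1) z
        rw [htoFun_e 1 (ν * z + d), pow_one] at h1
        rw [HE.toFun] at h1
        rw [h1, hv_tsum z, mul_div_assoc]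
    -- self-adjointness at the (1,1) entry
    have h11 := hsym (e 1) (e 1)
    simp only [ContinuousLinearMap.coe_coe] at h11
    rw [he] at h11
    rw [lp.inner_single_right, lp.inner_single_left] at h11
    rw [RCLike.inner_apply, RCLike.inner_apply, map_one, one_mul, mul_one] at h11
    rw [← he] at h11
    rw [happly (T (e 1)) 1, hcoeff1] at h11
    rw [hv_succ 0] at h11
    rw [div_mul_cancel₀ _ (hζC 1)] at h11
    -- h11 : conj (ν * u 0 + d * u 1) = ν * u 0 + d * u 1
    have hdu1 : conj (d * u 1) = d * u 1 := by
      rw [hrel0 1, pow_one]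
      simp only [map_mul, map_div₀, map_pow, Complex.conj_ofReal, Complex.conj_conj, hconj]
      ring
    rw [map_add, map_mul, hdu1, hu0, hconj] at h11
    have hνconj : conj ν = ν := by
      have h := add_right_cancel h11
      exact mul_right_cancel₀ h0 h
    obtain ⟨r, hr⟩ := Complex.conj_eq_iff_real.mp hνconj
    exact ⟨r, hr⟩
end
end

section
/- Let Φ(z) = d be a constant function on ℂ and let Υ be an entire function on ℂ such that C_{Υ,Φ} is bounded on H_E(ζ). Then C_{Υ,Φ} is self-adjoint if and only if Υ(z) = α K_{Φ(0)}(z) for all z ∈ ℂ, where α = ζ₀² \overline{Υ(0)} is a real number. -/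
open Filter ContinuousLinearMap
open scoped ComplexConjugate

noncomputable section

/-- If a power series sums to zero at every point of `ℂ`, its coefficients vanish. -/
lemma coeff_zero_of_hasSum_zero (a : ℕ → ℂ)
    (h : ∀ z : ℂ, HasSum (fun n => a n * z ^ n) 0) : ∀ n, a n = 0 := by
  set p := FormalMultilinearSeries.ofScalars ℂ a with hp
  have hc : ∀ n, p.coeff n = a n := by
    intro n
    simp [hp, FormalMultilinearSeries.ofScalars, FormalMultilinearSeries.coeff, List.prod_ofFn]
  have hps : HasFPowerSeriesAt (0 : ℂ → ℂ) p 0 := by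
    rw [hasFPowerSeriesAt_iff]
    filter_upwards with z
    simpa [hc, smul_eq_mul, mul_comm] using h z
  have h0 : p = 0 := hps.eq_zero
  intro n
  rw [← hc n, h0]
  simp [FormalMultilinearSeries.coeff]

/-- The Taylor series of an element of `H_E(ζ)` converges everywhere. -/
lemma HE.summable_coeff (ζ : ℕ → ℝ) (hζ : ∀ n, 0 < ζ n)
    (hlim : Tendsto (fun n : ℕ => (ζ n) ^ ((1 : ℝ) / n)) atTop atTop)
    (f : HE ζ) (z : ℂ) : Summable (fun n => HE.coeff ζ f n * z ^ n) := by
  have hB : (0:ℝ) < 2*(‖z‖+1) := by positivity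
  have hev : ∀ᶠ n in atTop, ‖HE.coeff ζ f n * z ^ n‖ ≤ ‖f‖ * ((1:ℝ)/2)^n := by
    filter_upwards [hlim.eventually_ge_atTop (2*(‖z‖+1)), eventually_ge_atTop 1] with n h1 h2
    have hζn := hζ n
    have hne : (n:ℝ) ≠ 0 := by
      exact_mod_cast Nat.one_le_iff_ne_zero.mp h2
    have hpow : ((ζ n) ^ ((1:ℝ)/n))^(n:ℕ) = ζ n := by
      rw [← Real.rpow_natCast (ζ n ^ ((1:ℝ)/(n:ℝ))) n, ← Real.rpow_mul hζn.le,
        one_div, inv_mul_cancel₀ hne, Real.rpow_one]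
    have hBn : (2*(‖z‖+1))^n ≤ ζ n := hpow ▸ pow_le_pow_left₀ hB.le h1 n
    have key : ‖z‖^n ≤ ((1:ℝ)/2)^n * ζ n := by
      calc ‖z‖^n ≤ (‖z‖+1)^n := pow_le_pow_left₀ (norm_nonneg z) (by linarith) n
        _ = ((1:ℝ)/2)^n * (2*(‖z‖+1))^n := by rw [← mul_pow]; ring_nf
        _ ≤ ((1:ℝ)/2)^n * ζ n := by
            exact mul_le_mul_of_nonneg_left hBn (by positivity)
    have h3 : ‖HE.coeff ζ f n * z ^ n‖ = ‖f n‖ * ‖z‖^n / ζ n := by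
      rw [HE.coeff, norm_mul, norm_div, norm_pow, Complex.norm_real,
        Real.norm_eq_abs, abs_of_pos hζn]
      ring
    rw [h3, div_le_iff₀ hζn]
    calc ‖f n‖ * ‖z‖^n ≤ ‖f‖ * (((1:ℝ)/2)^n * ζ n) :=
          mul_le_mul (lp.norm_apply_le_norm (by norm_num) f n) key (by positivity)
            (norm_nonneg f)
      _ = ‖f‖ * ((1:ℝ)/2)^n * ζ n := by ring
  refine summable_of_isBigO_nat (summable_geometric_of_lt_one (by norm_num) (by norm_num)
    (r := (1:ℝ)/2)) ?_
  refine Asymptotics.isBigO_iff.mpr ⟨‖f‖, ?_⟩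
  filter_upwards [hev] with n hn
  simpa [abs_of_pos, Real.norm_eq_abs, abs_pow] using hn

lemma HE.toFun_smul {ζ : ℕ → ℝ} (c : ℂ) (f : HE ζ) (z : ℂ) :
    HE.toFun ζ (c • f) z = c * HE.toFun ζ f z := by
  rw [HE.toFun, HE.toFun, ← tsum_mul_left]
  congr 1; funext n
  have : (c • f) n = c * f n := by
    rw [lp.coeFn_smul]; rfl
  rw [HE.coeff, HE.coeff, this]
  ring

/-- `H_E(ζ)` functions are determined by their values. -/
lemma HE.toFun_inj {ζ : ℕ → ℝ} (hζ : ∀ n, 0 < ζ n)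
    (hlim : Tendsto (fun n : ℕ => (ζ n) ^ ((1 : ℝ) / n)) atTop atTop)
    (f g : HE ζ) (h : ∀ z, HE.toFun ζ f z = HE.toFun ζ g z) : f = g := by
  have hc : ∀ n, HE.coeff ζ f n - HE.coeff ζ g n = 0 := by
    apply coeff_zero_of_hasSum_zero
    intro z
    have hs := ((HE.summable_coeff ζ hζ hlim f z).hasSum.sub
      (HE.summable_coeff ζ hζ hlim g z).hasSum)
    have hz : HE.toFun ζ f z - HE.toFun ζ g z = 0 := by rw [h z, sub_self]
    rw [show HE.toFun ζ f z - HE.toFun ζ g z =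
      (∑' n, HE.coeff ζ f n * z ^ n) - ∑' n, HE.coeff ζ g n * z ^ n from rfl] at hz
    rw [hz] at hs
    simpa only [sub_mul] using hs
  apply lp.ext
  funext n
  have hζn : ((ζ n : ℂ)) ≠ 0 := by exact_mod_cast (hζ n).ne'
  have := hc n
  rw [HE.coeff, HE.coeff, div_sub_div_same, div_eq_zero_iff] at this
  rcases this with h' | h'
  · exact sub_eq_zero.mp h'
  · exact absurd h' hζn

/-- The reproducing property: `⟪K p, f⟫ = f(p)`. -/
lemma HE.inner_K (ζ : ℕ → ℝ) (hζ : ∀ n, 0 < ζ n) (K : ℂ → HE ζ)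
    (hK : ∀ p n, HE.coeff ζ (K p) n = (conj p) ^ n / (ζ n : ℂ) ^ 2)
    (p : ℂ) (f : HE ζ) :
    (inner ℂ (K p) f : ℂ) = HE.toFun ζ f p := by
  rw [lp.inner_eq_tsum, HE.toFun]
  congr 1
  funext n
  have hζn : ((ζ n : ℂ)) ≠ 0 := by
    exact_mod_cast (hζ n).ne'
  have hKn : (K p) n = (conj p) ^ n / (ζ n : ℂ) := by
    have := hK p n
    rw [HE.coeff, div_eq_iff hζn] at this
    rw [this]
    field_simp
  rw [RCLike.inner_apply, hKn, HE.coeff]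
  rw [map_div₀, map_pow, Complex.conj_conj, Complex.conj_ofReal]
  ring

lemma HE.conj_toFun_K {ζ : ℕ → ℝ} {K : ℂ → HE ζ}
    (hK : ∀ p n, HE.coeff ζ (K p) n = (conj p) ^ n / (ζ n : ℂ) ^ 2)
    (z d : ℂ) : conj (HE.toFun ζ (K z) d) = HE.toFun ζ (K d) z := by
  rw [HE.toFun, HE.toFun, starRingEnd_apply, tsum_star]
  congr 1; funext n
  rw [hK, hK, ← starRingEnd_apply]
  rw [map_mul, map_div₀, map_pow, map_pow, map_pow, Complex.conj_conj, Complex.conj_ofReal]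
  ring

lemma HE.toFun_K_zero {ζ : ℕ → ℝ} {K : ℂ → HE ζ}
    (hK : ∀ p n, HE.coeff ζ (K p) n = (conj p) ^ n / (ζ n : ℂ) ^ 2)
    (d : ℂ) : HE.toFun ζ (K 0) d = 1 / (ζ 0 : ℂ) ^ 2 := by
  rw [HE.toFun, tsum_eq_single 0]
  · rw [hK]; simp
  · intro n hn
    rw [hK]
    simp [zero_pow hn]

lemma HE.toFun_K_at_zero {ζ : ℕ → ℝ} {K : ℂ → HE ζ}
    (hK : ∀ p n, HE.coeff ζ (K p) n = (conj p) ^ n / (ζ n : ℂ) ^ 2)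
    (d : ℂ) : HE.toFun ζ (K d) 0 = 1 / (ζ 0 : ℂ) ^ 2 := by
  rw [HE.toFun, tsum_eq_single 0]
  · rw [hK]; simp
  · intro n hn
    simp [zero_pow hn]

/-- For the constant symbol `Φ ≡ d` and entire `Υ` with `C_{Υ,Φ}` bounded on `H_E(ζ)`:
`C_{Υ,Φ}` is self-adjoint iff `Υ z = α K_{Φ 0} z` for all `z`, where
`α = ζ₀² conj (Υ 0)` is a real number. -/
theorem weighted_composition_selfAdjoint_iff_constant_symbol
    (ζ : ℕ → ℝ) (hζ : ∀ n, 0 < ζ n)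
    (hlim : Tendsto (fun n : ℕ => (ζ n) ^ ((1 : ℝ) / n)) atTop atTop)
    (d : ℂ)
    (Υ : ℂ → ℂ) (hΥ : Differentiable ℂ Υ)
    (K : ℂ → HE ζ) (hK : ∀ p n, HE.coeff ζ (K p) n = (conj p) ^ n / (ζ n : ℂ) ^ 2)
    (T : HE ζ →L[ℂ] HE ζ)
    (hT : ∀ f : HE ζ, ∀ z : ℂ, HE.toFun ζ (T f) z = Υ z * HE.toFun ζ f d) :
    IsSelfAdjoint T ↔
      ((∀ z : ℂ, Υ z = (ζ 0 : ℂ) ^ 2 * conj (Υ 0) * HE.toFun ζ (K d) z) ∧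
       ∃ r : ℝ, (ζ 0 : ℂ) ^ 2 * conj (Υ 0) = (r : ℂ)) := by
  have hζ0 : ((ζ 0 : ℂ)) ≠ 0 := by exact_mod_cast (hζ 0).ne'
  constructor
  · intro hsa
    have hsym := (isSelfAdjoint_iff_isSymmetric).mp hsa
    have key : ∀ z w : ℂ, Υ z * HE.toFun ζ (K w) d
        = conj (Υ w) * HE.toFun ζ (K d) z := by
      intro z w
      have e1 : (inner ℂ (K z) (T (K w)) : ℂ) = Υ z * HE.toFun ζ (K w) d := by
        rw [HE.inner_K ζ hζ K hK, hT]
      have e2 : (inner ℂ ((T : HE ζ →ₗ[ℂ] HE ζ) (K z)) (K w) : ℂ)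
          = conj (Υ w * HE.toFun ζ (K z) d) := by
        rw [← inner_conj_symm]
        congr 1
        rw [show ((T : HE ζ →ₗ[ℂ] HE ζ) (K z)) = T (K z) from rfl,
          HE.inner_K ζ hζ K hK, hT]
      rw [hsym (K z) (K w)] at e2
      rw [show ((T : HE ζ →ₗ[ℂ] HE ζ) (K w)) = T (K w) from rfl] at e2
      rw [e1] at e2
      rw [e2, map_mul, HE.conj_toFun_K hK]
    have hform : ∀ z : ℂ, Υ z = (ζ 0 : ℂ) ^ 2 * conj (Υ 0) * HE.toFun ζ (K d) z := by
      intro z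
      have := key z 0
      rw [HE.toFun_K_zero hK] at this
      field_simp at this
      rw [this]
    refine ⟨hform, ?_⟩
    have h0 : Υ 0 = conj (Υ 0) := by
      have := hform 0
      rw [HE.toFun_K_at_zero hK] at this
      field_simp at this
      exact this
    refine ⟨ζ 0 ^ 2 * (Υ 0).re, ?_⟩
    have hre : ((Υ 0).re : ℂ) = Υ 0 := Complex.conj_eq_iff_re.mp h0.symm
    push_cast
    rw [hre, ← h0]
  · rintro ⟨hform, r, hr⟩
    set α : ℂ := (ζ 0 : ℂ) ^ 2 * conj (Υ 0) with hα
    have hconjα : conj α = α := by rw [hr, Complex.conj_ofReal]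
    have hTf : ∀ f : HE ζ, T f = (α * HE.toFun ζ f d) • K d := by
      intro f
      apply HE.toFun_inj hζ hlim
      intro z
      rw [hT f z, hform z, HE.toFun_smul]
      ring
    rw [isSelfAdjoint_iff_isSymmetric]
    intro f g
    show (inner ℂ (T f) g : ℂ) = inner ℂ f (T g)
    rw [hTf f, hTf g, inner_smul_left, inner_smul_right,
      HE.inner_K ζ hζ K hK, ← inner_conj_symm f (K d), HE.inner_K ζ hζ K hK]
    rw [map_mul, hconjα]
    ring
end
end

section
/- Let Φ(z) = νz + d with |ν| ≤ 1 and let Υ be an entire function on ℂ such that C_{Υ,Φ} is bounded on H_E(ζ). If C_{Υ,Φ} is self-adjoint, then Υ(z) = α K_{Φ(0)}(z) for all z ∈ ℂ, where α = ζ₀² \overline{Υ(0)} is a real number, and one of the following holds: (i) Υ(0) = 0, in which case Υ ≡ 0 and C_{Υ,Φ} = 0; or (ii) Υ(0) ≠ 0 and ν is a real number. -/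
open Filter ContinuousLinearMap
open scoped ComplexConjugate

noncomputable section

lemma coeff_unique_zero (a : ℕ → ℂ)
    (hs : Summable (fun n => a n * (1:ℂ) ^ n))
    (h : ∀ z : ℂ, ∑' n, a n * z ^ n = 0) : ∀ n, a n = 0 := by
  set p := FormalMultilinearSeries.ofScalars ℂ a with hp
  have hco : ∀ n, (FormalMultilinearSeries.ofScalars ℂ a).coeff n = a n := by
    intro n
    show (FormalMultilinearSeries.ofScalars ℂ a) n (fun _ => 1) = a n
    rw [FormalMultilinearSeries.ofScalars_apply_eq]
    simp
  have hbig : (fun n => ‖p n‖ * ((1 : NNReal) : ℝ) ^ n) =O[atTop] (fun _ => (1:ℝ)) := by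
    have h0 : Tendsto (fun n => a n * (1:ℂ) ^ n) atTop (nhds 0) := hs.tendsto_atTop_zero
    have h1 : Tendsto (fun n => ‖p n‖ * ((1 : NNReal) : ℝ) ^ n) atTop (nhds 0) := by
      simpa [hp, FormalMultilinearSeries.ofScalars_norm, hco] using h0.norm
    exact h1.isBigO_one ℝ
  have hrad : (0 : ENNReal) < p.radius :=
    lt_of_lt_of_le (by norm_num) (p.le_radius_of_isBigO hbig)
  have hsum : p.sum = 0 := by
    funext z
    have h1 : p.sum z = ∑' n, a n • z ^ n :=
      FormalMultilinearSeries.ofScalars_sum_eq a z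
    simpa [smul_eq_mul, h z] using h1
  have hat : HasFPowerSeriesAt 0 p 0 := by
    rw [← hsum]
    exact (p.hasFPowerSeriesOnBall hrad).hasFPowerSeriesAt
  have hz := hat.eq_zero
  intro n
  have h2 := congrArg (fun q : FormalMultilinearSeries ℂ ℂ ℂ => q n (fun _ => (1:ℂ))) hz
  simpa [hp, FormalMultilinearSeries.ofScalars_apply_eq, hco] using h2

lemma coeff_unique (a b : ℕ → ℂ)
    (hsa : ∀ z : ℂ, Summable (fun n => a n * z ^ n))
    (hsb : ∀ z : ℂ, Summable (fun n => b n * z ^ n))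
    (h : ∀ z : ℂ, ∑' n, a n * z ^ n = ∑' n, b n * z ^ n) : ∀ n, a n = b n := by
  have key := coeff_unique_zero (fun n => a n - b n)
    (by simpa [sub_mul] using (hsa 1).sub (hsb 1))
    (by
      intro z
      have h1 : ∑' n, (a n * z ^ n - b n * z ^ n) = 0 := by
        rw [Summable.tsum_sub (hsa z) (hsb z), h z, sub_self]
      simpa [sub_mul] using h1)
  intro n
  exact sub_eq_zero.mp (key n)


/-- For `Φ z = ν z + d` with `|ν| ≤ 1` and entire `Υ` with `C_{Υ,Φ}` bounded on `H_E(ζ)`: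
if `C_{Υ,Φ}` is self-adjoint then `Υ z = α K_{Φ 0} z` where `α = ζ₀² conj (Υ 0)` is real,
and either (i) `Υ 0 = 0`, whence `Υ ≡ 0` and `C_{Υ,Φ} = 0`, or (ii) `Υ 0 ≠ 0` and `ν` is
real. -/
theorem weighted_composition_selfAdjoint_necessary_general
    (ζ : ℕ → ℝ) (hζ : ∀ n, 0 < ζ n)
    (hlim : Tendsto (fun n : ℕ => (ζ n) ^ ((1 : ℝ) / n)) atTop atTop)
    (ν d : ℂ) (hν : ‖ν‖ ≤ 1)
    (Υ : ℂ → ℂ) (hΥ : Differentiable ℂ Υ)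
    (K : ℂ → HE ζ) (hK : ∀ p n, HE.coeff ζ (K p) n = (conj p) ^ n / (ζ n : ℂ) ^ 2)
    (T : HE ζ →L[ℂ] HE ζ)
    (hT : ∀ f : HE ζ, ∀ z : ℂ, HE.toFun ζ (T f) z = Υ z * HE.toFun ζ f (ν * z + d)) :
    IsSelfAdjoint T →
      ((∀ z : ℂ, Υ z = (ζ 0 : ℂ) ^ 2 * conj (Υ 0) * HE.toFun ζ (K d) z) ∧
       (∃ r : ℝ, (ζ 0 : ℂ) ^ 2 * conj (Υ 0) = (r : ℂ)) ∧
       ((Υ 0 = 0 ∧ (∀ z : ℂ, Υ z = 0) ∧ T = 0) ∨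
        (Υ 0 ≠ 0 ∧ ∃ r : ℝ, ν = (r : ℂ)))) := by
  intro hSA
  have hζc : ∀ n, (ζ n : ℂ) ≠ 0 := fun n => by
    exact_mod_cast Complex.ofReal_ne_zero.mpr (hζ n).ne'
  -- components of K
  have hKn : ∀ (p : ℂ) (n : ℕ), (K p) n = (conj p) ^ n / (ζ n : ℂ) := by
    intro p n
    have h1 := hK p n
    rw [HE.coeff, div_eq_div_iff (hζc n) (pow_ne_zero 2 (hζc n))] at h1
    rw [eq_div_iff (hζc n)]
    rw [pow_two, ← mul_assoc] at h1
    exact mul_right_cancel₀ (hζc n) h1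
  -- inner products against kernels compute toFun
  have hterm : ∀ (p : ℂ) (g : HE ζ) (n : ℕ),
      (inner ℂ ((K p) n) (g n) : ℂ) = HE.coeff ζ g n * p ^ n := by
    intro p g n
    rw [RCLike.inner_apply, hKn, HE.coeff]
    simp only [map_div₀, map_pow, Complex.conj_conj, Complex.conj_ofReal]
    ring
  have hinner : ∀ (p : ℂ) (g : HE ζ), (inner ℂ (K p) g : ℂ) = HE.toFun ζ g p := by
    intro p g
    rw [lp.inner_eq_tsum, HE.toFun]
    exact tsum_congr fun n => hterm p g n
  have hsumm : ∀ (p : ℂ) (g : HE ζ), Summable (fun n => HE.coeff ζ g n * p ^ n) := by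
    intro p g
    exact (lp.summable_inner (𝕜 := ℂ) (K p) g).congr fun n => hterm p g n
  -- self-adjointness
  have hTsym : ∀ x y : HE ζ, (inner ℂ (T x) y : ℂ) = inner ℂ x (T y) := by
    intro x y
    nth_rewrite 1 [← ContinuousLinearMap.isSelfAdjoint_iff'.mp hSA]
    exact ContinuousLinearMap.adjoint_inner_left T y x
  -- toFun of smul
  have toFun_smul : ∀ (c : ℂ) (f : HE ζ) (z : ℂ),
      HE.toFun ζ (c • f) z = c * HE.toFun ζ f z := by
    intro c f z
    rw [HE.toFun, HE.toFun, ← tsum_mul_left]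
    refine tsum_congr fun n => ?_
    rw [HE.coeff, HE.coeff, lp.coeFn_smul]
    simp only [Pi.smul_apply, smul_eq_mul]
    ring
  -- key identity: T (K z) = conj (Υ z) • K (ν z + d)
  have hTK : ∀ z : ℂ, T (K z) = conj (Υ z) • K (ν * z + d) := by
    intro z
    refine ext_inner_right ℂ fun f => ?_
    rw [hTsym, hinner, hT, inner_smul_left, Complex.conj_conj, hinner]
  -- the constant function 1
  set e : HE ζ := ((ζ 0 : ℂ) ^ 2) • K 0 with he_def
  have hK0 : ∀ w : ℂ, HE.toFun ζ (K 0) w = 1 / (ζ 0 : ℂ) ^ 2 := by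
    intro w
    rw [HE.toFun, tsum_eq_single 0]
    · rw [hK]; simp
    · intro n hn; rw [hK]; simp [zero_pow hn]
  have he1 : ∀ w : ℂ, HE.toFun ζ e w = 1 := by
    intro w
    rw [he_def, toFun_smul, hK0, mul_one_div, div_self (pow_ne_zero 2 (hζc 0))]
  have hTe : T e = ((ζ 0 : ℂ) ^ 2 * conj (Υ 0)) • K d := by
    have h0 : ν * 0 + d = d := by ring
    rw [he_def, map_smul, hTK 0, smul_smul, h0]
  -- claim 1
  have claim1 : ∀ z : ℂ, Υ z = (ζ 0 : ℂ) ^ 2 * conj (Υ 0) * HE.toFun ζ (K d) z := by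
    intro z
    have h1 := hT e z
    rw [he1, mul_one, hTe, toFun_smul] at h1
    exact h1.symm
  -- toFun at 0 is the 0th coefficient
  have htf0 : ∀ g : HE ζ, HE.toFun ζ g 0 = HE.coeff ζ g 0 := by
    intro g
    rw [HE.toFun, tsum_eq_single 0]
    · simp
    · intro n hn; simp [zero_pow hn]
  -- reality of α
  have hUc : conj (Υ 0) = Υ 0 := by
    have h1 : (inner ℂ e (T e) : ℂ) = (ζ 0 : ℂ) ^ 2 * Υ 0 := by
      rw [he_def, inner_smul_left, hinner, hT, he1, mul_one]
      simp [Complex.conj_ofReal, htf0, hK]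
    have h2 : conj ((ζ 0 : ℂ) ^ 2 * Υ 0) = (ζ 0 : ℂ) ^ 2 * Υ 0 := by
      rw [← h1, inner_conj_symm, hTsym, h1]
    have h3 : conj ((ζ 0 : ℂ) ^ 2) = (ζ 0 : ℂ) ^ 2 := by
      simp [Complex.conj_ofReal]
    rw [map_mul, h3] at h2
    exact mul_left_cancel₀ (pow_ne_zero 2 (hζc 0)) h2
  have claim2 : ∃ r : ℝ, (ζ 0 : ℂ) ^ 2 * conj (Υ 0) = (r : ℂ) := by
    obtain ⟨t, ht⟩ : ∃ t : ℝ, Υ 0 = (t : ℂ) := Complex.conj_eq_iff_real.mp hUc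
    refine ⟨(ζ 0) ^ 2 * t, ?_⟩
    rw [hUc, ht]
    push_cast
    ring
  refine ⟨claim1, claim2, ?_⟩
  by_cases hc : Υ 0 = 0
  · -- case (i)
    left
    have hz : ∀ z : ℂ, Υ z = 0 := by
      intro z
      rw [claim1, hc, map_zero, mul_zero, zero_mul]
    refine ⟨hc, hz, ?_⟩
    have hcoeffz : ∀ (f : HE ζ) (m : ℕ), HE.coeff ζ (T f) m = 0 := by
      intro f
      refine coeff_unique_zero _ (hsumm 1 (T f)) fun z => ?_
      have := hT f z
      rw [hz, zero_mul] at this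
      exact this
    refine ContinuousLinearMap.ext fun f => ?_
    rw [ContinuousLinearMap.zero_apply]
    refine lp.ext (funext fun n => ?_)
    have h1 := hcoeffz f n
    rw [HE.coeff, div_eq_zero_iff] at h1
    have h2 : (T f) n = 0 := h1.resolve_right (hζc n)
    rw [h2, lp.coeFn_zero]
    rfl
  · -- case (ii)
    right
    refine ⟨hc, ?_⟩
    obtain ⟨r, hα⟩ := claim2
    have hα0 : ((r : ℂ)) ≠ 0 := by
      rw [← hα]
      refine mul_ne_zero (pow_ne_zero 2 (hζc 0)) fun h => hc ?_
      have := congrArg conj h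
      simpa using this
    -- the function z
    set f₁ : HE ζ := lp.single 2 1 ((ζ 1 : ℝ) : ℂ) with hf₁
    have htf1 : ∀ w : ℂ, HE.toFun ζ f₁ w = w := by
      intro w
      rw [HE.toFun, tsum_eq_single 1]
      · rw [HE.coeff, hf₁, lp.single_apply_self, div_self (hζc 1), one_mul, pow_one]
      · intro n hn
        rw [HE.coeff, hf₁, lp.single_apply_ne _ _ _ hn]
        simp
    -- power series expansion of Υ
    set u : ℕ → ℂ := fun n => (r : ℂ) * ((conj d) ^ n / (ζ n : ℂ) ^ 2) with hu
    have hUs : ∀ z : ℂ, Summable (fun n => u n * z ^ n) := by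
      intro z
      refine ((hsumm z (K d)).mul_left ((r : ℂ))).congr fun n => ?_
      rw [hu, hK]
      ring
    have hUeq : ∀ z : ℂ, Υ z = ∑' n, u n * z ^ n := by
      intro z
      rw [claim1 z, hα, HE.toFun, ← tsum_mul_left]
      refine tsum_congr fun n => ?_
      rw [hu, hK]
      ring
    -- series for Υ z * (ν z + d)
    set g : ℕ → ℂ → ℂ := fun n z => (if n = 0 then 0 else u (n - 1) * ν) * z ^ n with hg
    set b : ℕ → ℂ := fun n => (if n = 0 then 0 else u (n - 1) * ν) + u n * d with hb
    have hgs : ∀ z : ℂ, Summable (fun n => g n z) := by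
      intro z
      refine (summable_nat_add_iff 1).mp (((hUs z).mul_right (ν * z)).congr fun n => ?_)
      rw [hg]
      simp only [Nat.add_sub_cancel, Nat.succ_ne_zero, if_false]
      rw [pow_succ]
      ring
    have hds : ∀ z : ℂ, Summable (fun n => u n * d * z ^ n) := by
      intro z
      refine ((hUs z).mul_right d).congr fun n => ?_
      ring
    have hbs : ∀ z : ℂ, Summable (fun n => b n * z ^ n) := by
      intro z
      refine ((hgs z).add (hds z)).congr fun n => ?_
      rw [hb, hg]
      ring
    have hbt : ∀ z : ℂ, ∑' n, b n * z ^ n = Υ z * (ν * z + d) := by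
      intro z
      have h1 : ∑' n, b n * z ^ n = (∑' n, g n z) + ∑' n, u n * d * z ^ n := by
        rw [← Summable.tsum_add (hgs z) (hds z)]
        refine tsum_congr fun n => ?_
        rw [hb, hg]
        ring
      have h2 : ∑' n, g n z = Υ z * (ν * z) := by
        rw [Summable.tsum_eq_zero_add (hgs z)]
        have h3 : ∀ n : ℕ, g (n + 1) z = u n * z ^ n * (ν * z) := by
          intro n
          rw [hg]
          simp only [Nat.add_sub_cancel, Nat.succ_ne_zero, if_false]
          rw [pow_succ]
          ring
        rw [tsum_congr h3, tsum_mul_right, ← hUeq z]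
        simp [hg]
      have h4 : ∑' n, u n * d * z ^ n = Υ z * d := by
        have h5 : ∀ n : ℕ, u n * d * z ^ n = u n * z ^ n * d := fun n => by ring
        rw [tsum_congr h5, tsum_mul_right, ← hUeq z]
      rw [h1, h2, h4]
      ring
    -- coefficients of T f₁
    have hcoef : ∀ n, HE.coeff ζ (T f₁) n = b n := by
      refine coeff_unique _ _ (fun z => hsumm z (T f₁)) hbs fun z => ?_
      rw [hbt z, ← htf1 (ν * z + d), ← hT f₁ z]
      rfl
    have hb1 : HE.coeff ζ (T f₁) 1 = u 0 * ν + u 1 * d := by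
      rw [hcoef 1, hb]
      norm_num
    have hTf11 : (T f₁) 1 = (u 0 * ν + u 1 * d) * (ζ 1 : ℂ) := by
      have h1 := hb1
      rw [HE.coeff, div_eq_iff (hζc 1)] at h1
      exact h1
    -- self-adjointness at f₁
    have hβ : (inner ℂ f₁ (T f₁) : ℂ) = (ζ 1 : ℂ) * ((u 0 * ν + u 1 * d) * (ζ 1 : ℂ)) := by
      rw [hf₁, lp.inner_single_left, RCLike.inner_apply, Complex.conj_ofReal, ← hf₁, hTf11]
      ring
    have hsym : (inner ℂ f₁ (T f₁) : ℂ) = conj (inner ℂ f₁ (T f₁) : ℂ) := by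
      rw [inner_conj_symm, hTsym]
    have hu0 : u 0 = (r : ℂ) / (ζ 0 : ℂ) ^ 2 := by
      simp only [hu]
      ring
    have hu1 : u 1 = (r : ℂ) * conj d / (ζ 1 : ℂ) ^ 2 := by
      simp only [hu]
      ring
    have key : (ζ 1 : ℂ) * ((((r : ℂ) / (ζ 0 : ℂ) ^ 2) * ν + ((r : ℂ) * conj d / (ζ 1 : ℂ) ^ 2) * d) * (ζ 1 : ℂ))
        = conj ((ζ 1 : ℂ) * ((((r : ℂ) / (ζ 0 : ℂ) ^ 2) * ν + ((r : ℂ) * conj d / (ζ 1 : ℂ) ^ 2) * d) * (ζ 1 : ℂ))) := by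
      rw [← hu0, ← hu1, ← hβ]
      exact hsym
    have hνc : ν = conj ν := by
      simp only [map_mul, map_add, map_div₀, map_pow, Complex.conj_ofReal, Complex.conj_conj] at key
      have h0r : ζ 0 ≠ 0 := (hζ 0).ne'
      have h1r : ζ 1 ≠ 0 := (hζ 1).ne'
      field_simp [h0r, h1r] at key
      refine mul_left_cancel₀ (mul_ne_zero hα0 (pow_ne_zero 2 (hζc 1))) ?_
      linear_combination (r : ℂ) * key
    obtain ⟨s, hs⟩ := Complex.conj_eq_iff_real.mp hνc.symm
    exact ⟨s, hs⟩
end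
end

section
/- Let Φ(z) = νz − d for all z ∈ ℂ with |ν| ≤ 1, and suppose the composition operator C_Φ is bounded on H_E(ζ). Then C_Φ is a co-isometry (i.e. C_Φ C_Φ^* is the identity on H_E(ζ)) if and only if d = 0 and |ν| = 1. -/
open Filter ContinuousLinearMap
open scoped ComplexConjugate

noncomputable section

open scoped InnerProductSpace ENNReal NNReal

section Aux

variable (ζ : ℕ → ℝ)

lemma summable_pow_div_aux (hζ : ∀ n, 0 < ζ n)
    (hlim : Tendsto (fun n : ℕ => (ζ n) ^ ((1 : ℝ) / n)) atTop atTop)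
    (r : ℝ) (hr : 0 ≤ r) : Summable fun n : ℕ => r ^ n / ζ n := by
  have h2 : (0:ℝ) < 2 * (r + 1) := by linarith
  have hev : ∀ᶠ n : ℕ in atTop, r ^ n / ζ n ≤ (1 / 2 : ℝ) ^ n := by
    filter_upwards [hlim.eventually_ge_atTop (2 * (r + 1)), eventually_ge_atTop 1]
      with n hn hn1
    have hne : (n : ℝ) ≠ 0 := by
      exact_mod_cast (by omega : n ≠ 0)
    have hpow : (2 * (r + 1)) ^ n ≤ ζ n := by
      calc (2 * (r + 1)) ^ n ≤ (ζ n ^ ((1:ℝ)/n)) ^ n := pow_le_pow_left₀ h2.le hn n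
      _ = ζ n := by
        rw [← Real.rpow_natCast (ζ n ^ ((1:ℝ)/n)) n, ← Real.rpow_mul (hζ n).le,
          one_div, inv_mul_cancel₀ hne, Real.rpow_one]
    calc r ^ n / ζ n ≤ r ^ n / (2 * (r + 1)) ^ n :=
          div_le_div_of_nonneg_left (pow_nonneg hr n) (pow_pos h2 n) hpow
      _ = (r / (2 * (r + 1))) ^ n := (div_pow r _ n).symm
      _ ≤ (1 / 2 : ℝ) ^ n := by
          apply pow_le_pow_left₀ (by positivity)
          rw [div_le_div_iff₀ h2 (by norm_num)]
          linarith
  obtain ⟨N, hN⟩ := eventually_atTop.1 hev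
  rw [← summable_nat_add_iff N]
  refine Summable.of_nonneg_of_le
    (fun n => div_nonneg (pow_nonneg hr _) (hζ _).le)
    (fun n => hN (n + N) (by omega)) ?_
  exact (summable_nat_add_iff N).2 (summable_geometric_of_lt_one (by norm_num) (by norm_num))

lemma summable_sq_aux (hζ : ∀ n, 0 < ζ n)
    (hlim : Tendsto (fun n : ℕ => (ζ n) ^ ((1 : ℝ) / n)) atTop atTop)
    (s : ℝ) (hs : 0 ≤ s) : Summable fun n : ℕ => s ^ n / (ζ n) ^ 2 := by
  apply summable_pow_div_aux (fun n => (ζ n) ^ 2) (fun n => pow_pos (hζ n) 2) ?_ s hs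
  have heq : (fun n : ℕ => ((ζ n) ^ 2) ^ ((1:ℝ)/n)) = fun n : ℕ => ((ζ n) ^ ((1:ℝ)/n)) ^ 2 := by
    funext n
    rw [← Real.rpow_natCast (ζ n) 2, ← Real.rpow_mul (hζ n).le, mul_comm,
      Real.rpow_mul (hζ n).le, Real.rpow_natCast]
  rw [heq]
  exact (tendsto_pow_atTop two_ne_zero).comp hlim

variable (hζ : ∀ n, 0 < ζ n)
  (hlim : Tendsto (fun n : ℕ => (ζ n) ^ ((1 : ℝ) / n)) atTop atTop)

/-- The reproducing kernel at `z`. -/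
def kerf (z : ℂ) : HE ζ :=
  ⟨fun n => (conj z) ^ n / ((ζ n : ℝ) : ℂ), by
    apply memℓp_gen
    have key : ∀ n : ℕ, ‖(conj z) ^ n / ((ζ n : ℝ) : ℂ)‖ ^ ((2:ℝ≥0∞)).toReal
        = (‖z‖ ^ 2) ^ n / (ζ n) ^ 2 := by
      intro n
      have h2 : ((2 : ℝ≥0∞)).toReal = (2 : ℝ) := by norm_num
      rw [h2, Real.rpow_two, norm_div, norm_pow, RCLike.norm_conj, Complex.norm_real,
        Real.norm_eq_abs, abs_of_pos (hζ n), div_pow, ← pow_mul, mul_comm n 2, pow_mul]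
    exact (summable_sq_aux ζ hζ hlim (‖z‖ ^ 2) (by positivity)).congr fun n => (key n).symm⟩

lemma kerf_apply (z : ℂ) (n : ℕ) : (kerf ζ hζ hlim z) n = (conj z) ^ n / ((ζ n : ℝ) : ℂ) := rfl

lemma inner_kerf (z : ℂ) (f : HE ζ) : ⟪kerf ζ hζ hlim z, f⟫_ℂ = HE.toFun ζ f z := by
  rw [lp.inner_eq_tsum, HE.toFun]
  apply tsum_congr
  intro n
  rw [RCLike.inner_apply, kerf_apply, HE.coeff, map_div₀, map_pow, Complex.conj_conj,
    Complex.conj_ofReal]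
  ring

lemma inner_kerf_kerf (z w : ℂ) :
    ⟪kerf ζ hζ hlim z, kerf ζ hζ hlim w⟫_ℂ = ∑' n, (z ^ n * (conj w) ^ n) / ((ζ n : ℂ)) ^ 2 := by
  rw [lp.inner_eq_tsum]
  apply tsum_congr
  intro n
  rw [RCLike.inner_apply, kerf_apply, kerf_apply, map_div₀, map_pow, Complex.conj_conj,
    Complex.conj_ofReal]
  ring

lemma inner_kerf_self (z : ℂ) :
    ⟪kerf ζ hζ hlim z, kerf ζ hζ hlim z⟫_ℂ = ((∑' n, (‖z‖ ^ 2) ^ n / (ζ n) ^ 2 : ℝ) : ℂ) := by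
  rw [inner_kerf_kerf, Complex.ofReal_tsum]
  apply tsum_congr
  intro n
  rw [← mul_pow, Complex.mul_conj]
  push_cast [Complex.normSq_eq_norm_sq]
  ring

/-- Power series uniqueness: an element of `H_E(ζ)` orthogonal to all kernels is zero. -/
lemma kerf_orth_eq_zero (g : HE ζ) (hg : ∀ w : ℂ, ⟪kerf ζ hζ hlim w, g⟫_ℂ = 0) : g = 0 := by
  have hfun : ∀ w, HE.toFun ζ g w = 0 := fun w => by rw [← inner_kerf ζ hζ hlim]; exact hg w
  set p := FormalMultilinearSeries.ofScalars ℂ (HE.coeff ζ g) with hp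
  have hrad : (1 : ℝ≥0∞) ≤ p.radius := by
    have h1 := FormalMultilinearSeries.le_radius_of_summable_norm p (r := 1) ?_
    · simpa using h1
    · have hb : Summable fun n : ℕ => ‖g‖ * ((1:ℝ) ^ n / ζ n) :=
        (summable_pow_div_aux ζ hζ hlim 1 zero_le_one).mul_left _
      refine Summable.of_nonneg_of_le (fun n => by positivity) (fun n => ?_) hb
      rw [FormalMultilinearSeries.ofScalars_norm]
      simp only [NNReal.coe_one, one_pow, mul_one]
      rw [HE.coeff, norm_div, Complex.norm_real, Real.norm_eq_abs, abs_of_pos (hζ n), mul_one_div]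
      exact (div_le_div_iff_of_pos_right (hζ n)).mpr (lp.norm_apply_le_norm (by norm_num) g n)
  have h0 : 0 < p.radius := lt_of_lt_of_le zero_lt_one hrad
  have hsum_eq : p.sum = fun w => HE.toFun ζ g w := by
    funext w
    rw [FormalMultilinearSeries.sum, HE.toFun]
    apply tsum_congr
    intro n
    rw [hp, FormalMultilinearSeries.ofScalars_apply_eq, smul_eq_mul]
  have hzero : HasFPowerSeriesAt 0 p 0 := by
    have h1 := (p.hasFPowerSeriesOnBall h0).hasFPowerSeriesAt
    rw [hsum_eq] at h1
    have h2 : (fun w => HE.toFun ζ g w) = (0 : ℂ → ℂ) := funext fun w => hfun w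
    rwa [h2] at h1
  have hp0 : p = 0 := hzero.eq_zero
  rw [hp, FormalMultilinearSeries.ofScalars_series_eq_zero] at hp0
  apply lp.ext
  funext n
  have hc : HE.coeff ζ g n = 0 := congrFun hp0 n
  rw [HE.coeff, div_eq_zero_iff] at hc
  rcases hc with hc | hc
  · simpa using hc
  · exact absurd hc (by exact_mod_cast (hζ n).ne')

end Aux

/-- For `Φ z = ν z - d` with `|ν| ≤ 1` inducing a bounded composition operator on `H_E(ζ)`:
`C_Φ` is a co-isometry (`C_Φ C_Φ* = I`) iff `d = 0` and `|ν| = 1`. -/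
theorem composition_coisometry_iff
    (ζ : ℕ → ℝ) (hζ : ∀ n, 0 < ζ n)
    (hlim : Tendsto (fun n : ℕ => (ζ n) ^ ((1 : ℝ) / n)) atTop atTop)
    (ν d : ℂ) (hν : ‖ν‖ ≤ 1)
    (T : HE ζ →L[ℂ] HE ζ)
    (hT : ∀ f : HE ζ, ∀ z : ℂ, HE.toFun ζ (T f) z = HE.toFun ζ f (ν * z - d)) :
    T.comp (adjoint T) = ContinuousLinearMap.id ℂ (HE ζ) ↔ d = 0 ∧ ‖ν‖ = 1 := by
  have hadj : ∀ z : ℂ, adjoint T (kerf ζ hζ hlim z) = kerf ζ hζ hlim (ν * z - d) := by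
    intro z
    apply ext_inner_right ℂ
    intro f
    rw [adjoint_inner_left, inner_kerf, inner_kerf, hT]
  constructor
  · intro h
    have key : ∀ z : ℂ,
        (∑' n, (‖ν * z - d‖ ^ 2) ^ n / (ζ n) ^ 2 : ℝ) = ∑' n, (‖z‖ ^ 2) ^ n / (ζ n) ^ 2 := by
      intro z
      have hTT : T (adjoint T (kerf ζ hζ hlim z)) = kerf ζ hζ hlim z := by
        have h2 := congrFun (congrArg DFunLike.coe h) (kerf ζ hζ hlim z)
        simpa using h2
      have h1 : ⟪kerf ζ hζ hlim (ν * z - d), kerf ζ hζ hlim (ν * z - d)⟫_ℂ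
          = ⟪kerf ζ hζ hlim z, kerf ζ hζ hlim z⟫_ℂ := by
        rw [← hadj z, adjoint_inner_left, hTT]
      rw [inner_kerf_self, inner_kerf_self] at h1
      exact_mod_cast h1
    have hd : d = 0 := by
      have h0 := key 0
      rw [show ν * 0 - d = -d by ring] at h0
      rw [norm_neg, norm_zero] at h0
      have hr0 : (∑' n : ℕ, ((0:ℝ) ^ 2) ^ n / (ζ n) ^ 2) = 1 / (ζ 0) ^ 2 := by
        rw [tsum_eq_single 0 (fun b hb => by simp [zero_pow hb])]
        norm_num
      rw [hr0] at h0
      have hsum : Summable (fun n : ℕ => (‖d‖ ^ 2) ^ n / (ζ n) ^ 2) :=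
        summable_sq_aux ζ hζ hlim _ (by positivity)
      have hle := Summable.sum_le_tsum ({0, 1} : Finset ℕ) (fun n _ => by positivity) hsum
      rw [Finset.sum_pair (by norm_num : (0:ℕ) ≠ 1), h0] at hle
      simp only [pow_zero, pow_one] at hle
      have h6 : ‖d‖ ^ 2 ≤ 0 := by
        by_contra hcon
        push_neg at hcon
        have := div_pos hcon (pow_pos (hζ 1) 2)
        linarith
      have h7 : ‖d‖ ^ 2 = 0 := le_antisymm h6 (by positivity)
      exact norm_eq_zero.mp (pow_eq_zero_iff two_ne_zero |>.mp h7)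
    refine ⟨hd, ?_⟩
    have h1 := key 1
    rw [hd] at h1
    simp only [mul_one, sub_zero, norm_one, one_pow] at h1
    have S1 : Summable (fun n : ℕ => (1:ℝ) / (ζ n) ^ 2) := by
      have := summable_sq_aux ζ hζ hlim 1 zero_le_one
      simpa using this
    have Sν : Summable (fun n : ℕ => (‖ν‖ ^ 2) ^ n / (ζ n) ^ 2) :=
      summable_sq_aux ζ hζ hlim _ (by positivity)
    have hν2 : ‖ν‖ ^ 2 ≤ 1 := by nlinarith [norm_nonneg ν]
    have hS : Summable (fun n : ℕ => (1:ℝ) / (ζ n) ^ 2 - (‖ν‖ ^ 2) ^ n / (ζ n) ^ 2) := S1.sub Sν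
    have ht : (∑' n : ℕ, ((1:ℝ) / (ζ n) ^ 2 - (‖ν‖ ^ 2) ^ n / (ζ n) ^ 2)) = 0 := by
      rw [Summable.tsum_sub S1 Sν, sub_eq_zero]
      exact h1.symm
    have hterm : (1:ℝ) / (ζ 1) ^ 2 - (‖ν‖ ^ 2) ^ 1 / (ζ 1) ^ 2 ≤ 0 := by
      rw [← ht]
      apply Summable.le_tsum hS 1
      intro j _
      have hle1 : (‖ν‖ ^ 2) ^ j ≤ 1 := by
        calc (‖ν‖ ^ 2) ^ j ≤ 1 ^ j := pow_le_pow_left₀ (by positivity) hν2 j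
        _ = 1 := one_pow j
      have hzj : (0:ℝ) < (ζ j) ^ 2 := pow_pos (hζ j) 2
      rw [sub_nonneg]
      exact (div_le_div_iff_of_pos_right hzj).mpr hle1
    rw [pow_one] at hterm
    have hν2' : 1 ≤ ‖ν‖ ^ 2 := by
      by_contra hcon
      push_neg at hcon
      have hz1 : (0:ℝ) < (ζ 1) ^ 2 := pow_pos (hζ 1) 2
      have := div_pos (by linarith : (0:ℝ) < 1 - ‖ν‖ ^ 2) hz1
      rw [sub_div] at this
      linarith
    have hsq : ‖ν‖ ^ 2 = 1 := le_antisymm hν2 hν2'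
    have h4 : (‖ν‖ - 1) * (‖ν‖ + 1) = 0 := by linear_combination hsq
    rcases mul_eq_zero.mp h4 with h5 | h5
    · linarith [sub_eq_zero.mp h5, (le_refl (0:ℝ))]
    · linarith [norm_nonneg ν]
  · rintro ⟨rfl, hν1⟩
    have hadj0 : ∀ z : ℂ, adjoint T (kerf ζ hζ hlim z) = kerf ζ hζ hlim (ν * z) := by
      intro z
      rw [hadj z, sub_zero]
    set A := T.comp (adjoint T) - ContinuousLinearMap.id ℂ (HE ζ) with hA
    have hA0 : ∀ z : ℂ, A (kerf ζ hζ hlim z) = 0 := by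
      intro z
      apply kerf_orth_eq_zero ζ hζ hlim
      intro w
      have hstep : ⟪kerf ζ hζ hlim w, A (kerf ζ hζ hlim z)⟫_ℂ
          = ⟪kerf ζ hζ hlim (ν * w), kerf ζ hζ hlim (ν * z)⟫_ℂ
            - ⟪kerf ζ hζ hlim w, kerf ζ hζ hlim z⟫_ℂ := by
        rw [hA]
        simp only [ContinuousLinearMap.sub_apply, ContinuousLinearMap.comp_apply,
          ContinuousLinearMap.id_apply, inner_sub_right]
        congr 1
        rw [← adjoint_inner_left, hadj0 w, hadj0 z]
      rw [hstep, inner_kerf_kerf, inner_kerf_kerf, sub_eq_zero]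
      apply tsum_congr
      intro n
      congr 1
      have hν' : ν * conj ν = 1 := by
        rw [Complex.mul_conj]
        norm_cast
        rw [Complex.normSq_eq_norm_sq, hν1, one_pow]
      calc (ν * w) ^ n * (conj (ν * z)) ^ n
          = (ν * conj ν) ^ n * (w ^ n * (conj z) ^ n) := by rw [map_mul]; ring
        _ = w ^ n * (conj z) ^ n := by rw [hν', one_pow, one_mul]
    have hdense : (Submodule.span ℂ (Set.range (kerf ζ hζ hlim))).topologicalClosure = ⊤ := by
      rw [Submodule.topologicalClosure_eq_top_iff, Submodule.eq_bot_iff]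
      intro x hx
      apply kerf_orth_eq_zero ζ hζ hlim
      intro w
      exact (Submodule.mem_orthogonal _ x).1 hx _ (Submodule.subset_span (Set.mem_range_self w))
    have hker : Submodule.span ℂ (Set.range (kerf ζ hζ hlim)) ≤ LinearMap.ker (A : HE ζ →ₗ[ℂ] HE ζ) := by
      rw [Submodule.span_le]
      rintro x ⟨z, rfl⟩
      exact LinearMap.mem_ker.2 (hA0 z)
    have hker2 : (⊤ : Submodule ℂ (HE ζ)) ≤ LinearMap.ker (A : HE ζ →ₗ[ℂ] HE ζ) := by
      rw [← hdense]
      exact Submodule.topologicalClosure_minimal _ hker (ContinuousLinearMap.isClosed_ker A)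
    have hAz : A = 0 := ContinuousLinearMap.ext fun x => by
      rw [ContinuousLinearMap.zero_apply]
      exact LinearMap.mem_ker.1 (hker2 Submodule.mem_top)
    rw [hA] at hAz
    exact sub_eq_zero.1 hAz
end
end

section
/- Let Φ(z) = νz for all z ∈ ℂ with |ν| ≤ 1 and let Υ be an entire function on ℂ such that C_{Υ,Φ} is bounded on H_E(ζ). Then C_{Υ,Φ} is a co-isometry if and only if |ν| = 1 and Υ is the constant function Υ(z) = 1/\overline{Υ(0)} for all z ∈ ℂ with |Υ(z)| = 1. -/
open Filter ContinuousLinearMap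
open scoped ComplexConjugate

noncomputable section

namespace WCaux

variable (ζ : ℕ → ℝ)

lemma summable_norm (hζ : ∀ n, 0 < ζ n)
    (hlim : Tendsto (fun n : ℕ => (ζ n) ^ ((1 : ℝ) / n)) atTop atTop)
    (f : HE ζ) (z : ℂ) :
    Summable (fun n => ‖HE.coeff ζ f n * z ^ n‖) := by
  set B : ℝ := 2 * (‖z‖ + 1) with hBdef
  have hB0 : 0 < B := by positivity
  obtain ⟨N, hN⟩ := Filter.eventually_atTop.mp (hlim.eventually_ge_atTop B)
  set M : ℕ := max N 1 with hMdef
  have key : ∀ n : ℕ, M ≤ n → B ^ n ≤ ζ n := by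
    intro n hn
    have h1 : N ≤ n := le_trans (le_max_left _ _) hn
    have h2 : 1 ≤ n := le_trans (le_max_right _ _) hn
    have h3 : B ≤ ζ n ^ ((1 : ℝ) / n) := hN n h1
    have hn0 : (n : ℝ) ≠ 0 := by positivity
    calc B ^ n ≤ (ζ n ^ ((1 : ℝ) / n)) ^ n := pow_le_pow_left₀ hB0.le h3 n
      _ = ζ n := by
          rw [← Real.rpow_natCast (ζ n ^ ((1 : ℝ) / n)) n, ← Real.rpow_mul (hζ n).le,
            one_div, inv_mul_cancel₀ hn0, Real.rpow_one]
  rw [← summable_nat_add_iff M]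
  have hgeo : Summable (fun n : ℕ => (‖f‖ * (1 / 2 : ℝ) ^ M) * (1 / 2 : ℝ) ^ n) :=
    (summable_geometric_of_lt_one (by norm_num) (by norm_num)).mul_left _
  refine Summable.of_nonneg_of_le (fun n => norm_nonneg _) (fun n => ?_) hgeo
  set m : ℕ := n + M with hmdef
  have hm : M ≤ m := by omega
  have hζm : B ^ m ≤ ζ m := key m hm
  have hBm : (0:ℝ) < B ^ m := pow_pos hB0 m
  have hnorm : ‖HE.coeff ζ f m * z ^ m‖ = ‖(f : ∀ _ : ℕ, ℂ) m‖ * ‖z‖ ^ m / ζ m := by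
    rw [HE.coeff, norm_mul, norm_div, norm_pow, Complex.norm_real, Real.norm_eq_abs,
      abs_of_pos (hζ m)]
    ring
  rw [hnorm]
  have hfb : ‖(f : ∀ _ : ℕ, ℂ) m‖ ≤ ‖f‖ := lp.norm_apply_le_norm (by norm_num) f m
  have step1 : ‖(f : ∀ _ : ℕ, ℂ) m‖ * ‖z‖ ^ m / ζ m ≤ ‖f‖ * ‖z‖ ^ m / B ^ m := by
    apply div_le_div₀ (by positivity) _ hBm hζm
    exact mul_le_mul_of_nonneg_right hfb (by positivity)
  refine step1.trans ?_
  have hzB : ‖z‖ / B ≤ 1 / 2 := by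
    rw [div_le_div_iff₀ hB0 (by norm_num)]
    nlinarith [norm_nonneg z]
  have : ‖f‖ * ‖z‖ ^ m / B ^ m = ‖f‖ * (‖z‖ / B) ^ m := by
    rw [div_pow]; ring
  rw [this]
  have : (‖z‖ / B) ^ m ≤ (1 / 2 : ℝ) ^ m :=
    pow_le_pow_left₀ (by positivity) hzB m
  calc ‖f‖ * (‖z‖ / B) ^ m ≤ ‖f‖ * (1 / 2 : ℝ) ^ m :=
        mul_le_mul_of_nonneg_left this (norm_nonneg _)
    _ = ‖f‖ * (1 / 2 : ℝ) ^ M * (1 / 2 : ℝ) ^ n := by rw [hmdef, pow_add]; ring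


lemma hasSum_toFun (hζ : ∀ n, 0 < ζ n)
    (hlim : Tendsto (fun n : ℕ => (ζ n) ^ ((1 : ℝ) / n)) atTop atTop)
    (f : HE ζ) (z : ℂ) :
    HasSum (fun n => HE.coeff ζ f n * z ^ n) (HE.toFun ζ f z) :=
  ((summable_norm ζ hζ hlim f z).of_norm).hasSum

lemma hasFPowerSeriesAt_toFun (hζ : ∀ n, 0 < ζ n)
    (hlim : Tendsto (fun n : ℕ => (ζ n) ^ ((1 : ℝ) / n)) atTop atTop) (f : HE ζ) :
    HasFPowerSeriesAt (HE.toFun ζ f)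
      (FormalMultilinearSeries.ofScalars ℂ (HE.coeff ζ f)) 0 := by
  rw [hasFPowerSeriesAt_iff]
  filter_upwards with z
  have h := hasSum_toFun ζ hζ hlim f z
  simp only [zero_add]
  convert h using 1
  · rfl
  funext n
  have hc : (FormalMultilinearSeries.ofScalars ℂ (HE.coeff ζ f)).coeff n = HE.coeff ζ f n := by
    show FormalMultilinearSeries.ofScalars ℂ (HE.coeff ζ f) n (fun _ => 1) = _
    rw [FormalMultilinearSeries.ofScalars_apply_eq]
    simp
  rw [hc, smul_eq_mul, mul_comm]

lemma toFun_injective (hζ : ∀ n, 0 < ζ n)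
    (hlim : Tendsto (fun n : ℕ => (ζ n) ^ ((1 : ℝ) / n)) atTop atTop)
    (f g : HE ζ) (h : ∀ z, HE.toFun ζ f z = HE.toFun ζ g z) : f = g := by
  have h1 := hasFPowerSeriesAt_toFun ζ hζ hlim f
  have h2 := hasFPowerSeriesAt_toFun ζ hζ hlim g
  have h3 := h1.eq_formalMultilinearSeries_of_eventually h2 (Filter.Eventually.of_forall h)
  have h4 : HE.coeff ζ f = HE.coeff ζ g :=
    FormalMultilinearSeries.ofScalars_series_injective ℂ ℂ h3
  apply lp.ext
  funext n
  have h5 : (f : ∀ _ : ℕ, ℂ) n / (ζ n : ℂ) = (g : ∀ _ : ℕ, ℂ) n / (ζ n : ℂ) :=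
    congrFun h4 n
  have hzn : ((ζ n : ℝ) : ℂ) ≠ 0 := Complex.ofReal_ne_zero.mpr (hζ n).ne'
  field_simp at h5
  exact h5

lemma toFun_smul_single (hζ : ∀ n, 0 < ζ n) (c : ℂ) (n : ℕ) (z : ℂ) :
    HE.toFun ζ (c • lp.single 2 n 1) z = c * z ^ n / ζ n := by
  unfold HE.toFun HE.coeff
  rw [tsum_eq_single n]
  · have : (c • lp.single 2 n (1:ℂ) : HE ζ) n = c := by
      rw [lp.coeFn_smul, Pi.smul_apply, lp.single_apply_self, smul_eq_mul, mul_one]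
    rw [this]; ring
  · intro m hmn
    have : (c • lp.single 2 n (1:ℂ) : HE ζ) m = 0 := by
      rw [lp.coeFn_smul, Pi.smul_apply, lp.single_apply_ne _ _ _ hmn, smul_zero]
    rw [this, zero_div, zero_mul]

lemma toFun_zero_eq (f : HE ζ) : HE.toFun ζ f 0 = f 0 / ζ 0 := by
  unfold HE.toFun HE.coeff
  rw [tsum_eq_single 0]
  · simp
  · intro m hm; simp [zero_pow hm]


lemma T_coord (hζ : ∀ n, 0 < ζ n)
    (hlim : Tendsto (fun n : ℕ => (ζ n) ^ ((1 : ℝ) / n)) atTop atTop)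
    {ν : ℂ} (hν : ‖ν‖ ≤ 1) {c : ℂ} (hc1 : ‖c‖ = 1)
    (T : HE ζ →L[ℂ] HE ζ)
    (hT' : ∀ f : HE ζ, ∀ z : ℂ, HE.toFun ζ (T f) z = c * HE.toFun ζ f (ν * z))
    (f : HE ζ) (n : ℕ) : (T f) n = c * ν ^ n * f n := by
  have hbound : ∀ m : ℕ, ‖c * ν ^ m * (f : ∀ _ : ℕ, ℂ) m‖ ≤ ‖(f : ∀ _ : ℕ, ℂ) m‖ := by
    intro m
    rw [norm_mul, norm_mul, hc1, one_mul, norm_pow]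
    have : ‖ν‖ ^ m ≤ 1 := pow_le_one₀ (norm_nonneg _) hν
    nlinarith [norm_nonneg ((f : ∀ _ : ℕ, ℂ) m)]
  have hmem : Memℓp (fun m : ℕ => c * ν ^ m * f m) 2 := by
    apply memℓp_gen
    have hsum := (lp.memℓp f).summable (p := 2) (by norm_num)
    refine Summable.of_nonneg_of_le (fun m => ?_) (fun m => ?_) hsum
    · positivity
    · exact Real.rpow_le_rpow (norm_nonneg _) (hbound m) (by norm_num)
  set g : HE ζ := ⟨fun m : ℕ => c * ν ^ m * f m, hmem⟩ with hgdef
  have hg : ∀ z, HE.toFun ζ g z = c * HE.toFun ζ f (ν * z) := by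
    intro z
    unfold HE.toFun HE.coeff
    rw [← tsum_mul_left]
    apply tsum_congr
    intro m
    have hgm : (g : ∀ _ : ℕ, ℂ) m = c * ν ^ m * f m := rfl
    rw [hgm, mul_pow]
    ring
  have : T f = g := toFun_injective ζ hζ hlim _ _ (fun z => (hT' f z).trans (hg z).symm)
  rw [this]

lemma adjoint_coord (hζ : ∀ n, 0 < ζ n)
    (hlim : Tendsto (fun n : ℕ => (ζ n) ^ ((1 : ℝ) / n)) atTop atTop)
    {ν : ℂ} (hν : ‖ν‖ ≤ 1) {c : ℂ} (hc1 : ‖c‖ = 1)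
    (T : HE ζ →L[ℂ] HE ζ)
    (hT' : ∀ f : HE ζ, ∀ z : ℂ, HE.toFun ζ (T f) z = c * HE.toFun ζ f (ν * z))
    (f : HE ζ) (n : ℕ) : (adjoint T f) n = conj (c * ν ^ n) * f n := by
  have hTe : T (lp.single 2 n 1) = (c * ν ^ n) • lp.single 2 n (1 : ℂ) := by
    apply lp.ext
    funext m
    rw [T_coord ζ hζ hlim hν hc1 T hT' _ m, lp.coeFn_smul, Pi.smul_apply, smul_eq_mul]
    rcases eq_or_ne m n with rfl | hmn
    · rw [lp.single_apply_self]
    · rw [lp.single_apply_ne _ _ _ hmn, mul_zero, mul_zero]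
  have h1 : (adjoint T f) n = @inner ℂ _ _ (lp.single 2 n (1 : ℂ)) (adjoint T f) := by
    rw [lp.inner_single_left]
    simp [RCLike.inner_apply]
  rw [h1, ContinuousLinearMap.adjoint_inner_right, hTe, inner_smul_left,
    lp.inner_single_left]
  simp [RCLike.inner_apply]


end WCaux

open WCaux in
/-- For `Φ z = ν z` with `|ν| ≤ 1` and entire `Υ` with `C_{Υ,Φ}` bounded on `H_E(ζ)`:
`C_{Υ,Φ}` is a co-isometry iff `|ν| = 1` and `Υ` is the constant `1 / conj (Υ 0)`, of
modulus `1`. -/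
theorem weighted_composition_coisometry_iff_linear_symbol
    (ζ : ℕ → ℝ) (hζ : ∀ n, 0 < ζ n)
    (hlim : Tendsto (fun n : ℕ => (ζ n) ^ ((1 : ℝ) / n)) atTop atTop)
    (ν : ℂ) (hν : ‖ν‖ ≤ 1)
    (Υ : ℂ → ℂ) (hΥ : Differentiable ℂ Υ)
    (T : HE ζ →L[ℂ] HE ζ)
    (hT : ∀ f : HE ζ, ∀ z : ℂ, HE.toFun ζ (T f) z = Υ z * HE.toFun ζ f (ν * z)) :
    T.comp (adjoint T) = ContinuousLinearMap.id ℂ (HE ζ) ↔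
      (‖ν‖ = 1 ∧ (∀ z : ℂ, Υ z = (conj (Υ 0))⁻¹) ∧ ∀ z : ℂ, ‖Υ z‖ = 1) := by
  have hζ0 : ((ζ 0 : ℝ) : ℂ) ≠ 0 := Complex.ofReal_ne_zero.mpr (hζ 0).ne'
  constructor
  · intro hTT
    have happ : ∀ g : HE ζ, T (adjoint T g) = g := by
      intro g
      have := ContinuousLinearMap.ext_iff.mp hTT g
      simpa using this
    have hTg0 : ∀ g : HE ζ, (T g) 0 = Υ 0 * g 0 := by
      intro g
      have h1 := hT g 0
      rw [toFun_zero_eq, mul_zero, toFun_zero_eq] at h1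
      field_simp at h1
      exact h1
    have hTe0 : adjoint T (lp.single 2 0 (1:ℂ)) = conj (Υ 0) • lp.single 2 0 (1:ℂ) := by
      apply lp.ext
      funext n
      have h1 : (adjoint T (lp.single 2 0 (1:ℂ))) n
          = @inner ℂ _ _ (lp.single 2 n (1 : ℂ)) (adjoint T (lp.single 2 0 (1:ℂ))) := by
        rw [lp.inner_single_left]; simp [RCLike.inner_apply]
      rw [h1, ContinuousLinearMap.adjoint_inner_right, lp.inner_single_right,
        lp.coeFn_smul, Pi.smul_apply, smul_eq_mul]
      simp only [RCLike.inner_apply, mul_one]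
      rw [hTg0]
      rcases eq_or_ne n 0 with rfl | hn0
      · simp [lp.single_apply_self]
      · rw [lp.single_apply_ne _ _ _ (Ne.symm hn0), lp.single_apply_ne _ _ _ hn0]
        simp
    have h3 : conj (Υ 0) • T (lp.single 2 0 (1:ℂ)) = lp.single 2 0 (1:ℂ) := by
      have h := happ (lp.single 2 0 (1:ℂ))
      rw [hTe0] at h
      rw [ContinuousLinearMap.map_smul] at h
      exact h
    have hcne : conj (Υ 0) ≠ 0 := by
      intro h
      rw [h, zero_smul] at h3
      have h4 := congrArg (fun x : HE ζ => (x : ∀ _ : ℕ, ℂ) 0) h3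
      simp only [lp.coeFn_zero, Pi.zero_apply, lp.single_apply_self] at h4
      exact zero_ne_one h4
    set c : ℂ := (conj (Υ 0))⁻¹ with hcdef
    have hTe0' : T (lp.single 2 0 (1:ℂ)) = c • lp.single 2 0 (1:ℂ) := by
      have h := congrArg (fun v : HE ζ => c • v) h3
      rw [smul_smul, hcdef, inv_mul_cancel₀ hcne, one_smul] at h
      exact h
    have hUc : ∀ z, Υ z = c := by
      intro z
      have h4 := hT (lp.single 2 0 (1:ℂ)) z
      have h5 := toFun_smul_single ζ hζ (1:ℂ) 0 (ν * z)
      rw [one_smul] at h5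
      rw [hTe0', toFun_smul_single ζ hζ c 0 z, h5] at h4
      simp only [pow_zero, mul_one, one_mul] at h4
      field_simp at h4
      exact h4.symm
    have hcinvne : c ≠ 0 := inv_ne_zero hcne
    have hcpos : (0:ℝ) < ‖c‖ := norm_pos_iff.mpr hcinvne
    have hccinv : ‖c‖ = ‖c‖⁻¹ := by
      conv_rhs => rw [← hUc 0]
      rw [hcdef, norm_inv, RCLike.norm_conj]
    have hc1 : ‖c‖ = 1 := by
      have h6 : ‖c‖ * ‖c‖ = 1 := by
        nth_rewrite 1 [hccinv]
        exact inv_mul_cancel₀ hcpos.ne'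
      nlinarith
    have hT' : ∀ f : HE ζ, ∀ z : ℂ, HE.toFun ζ (T f) z = c * HE.toFun ζ f (ν * z) :=
      fun f z => by rw [hT f z, hUc z]
    refine ⟨?_, fun z => hUc z, fun z => by rw [hUc z]; exact hc1⟩
    have h7 := happ (lp.single 2 1 (1:ℂ))
    have h8 := congrArg (fun x : HE ζ => (x : ∀ _ : ℕ, ℂ) 1) h7
    simp only at h8
    rw [T_coord ζ hζ hlim hν hc1 T hT' _ 1,
      adjoint_coord ζ hζ hlim hν hc1 T hT' _ 1, lp.single_apply_self] at h8
    have h9 := congrArg norm h8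
    simp only [norm_mul, RCLike.norm_conj, norm_pow, hc1, norm_one, one_mul, mul_one,
      pow_one] at h9
    exact le_antisymm hν (by nlinarith [norm_nonneg ν])
  · rintro ⟨hν1, hU, hUn⟩
    have hc1 : ‖(conj (Υ 0))⁻¹‖ = 1 := by rw [← hU 0]; exact hUn 0
    have hT' : ∀ f : HE ζ, ∀ z : ℂ,
        HE.toFun ζ (T f) z = (conj (Υ 0))⁻¹ * HE.toFun ζ f (ν * z) :=
      fun f z => by rw [hT f z, hU z]
    apply ContinuousLinearMap.ext
    intro f
    simp only [ContinuousLinearMap.comp_apply, ContinuousLinearMap.id_apply]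
    apply lp.ext
    funext n
    rw [T_coord ζ hζ hlim hν hc1 T hT' _ n, adjoint_coord ζ hζ hlim hν hc1 T hT' _ n]
    have hnz : ‖(conj (Υ 0))⁻¹ * ν ^ n‖ = 1 := by
      rw [norm_mul, norm_pow, hc1, hν1, one_pow, mul_one]
    have h9 : ((conj (Υ 0))⁻¹ * ν ^ n) * conj ((conj (Υ 0))⁻¹ * ν ^ n) = 1 := by
      rw [Complex.mul_conj, Complex.normSq_eq_norm_sq, hnz]
      norm_num
    rw [← mul_assoc, h9, one_mul]
end
end

section
/- Let Φ(z) = νz − d with |ν| ≤ 1 and let Υ be an entire function on ℂ such that C_{Υ,Φ} is bounded on H_E(ζ). If C_{Υ,Φ} is a co-isometry, then Υ(z) = α K_{\bar{ν}d}(z)/‖K_{\bar{ν}d}‖ for all z ∈ ℂ, where α = 1/(\overline{Υ(0)} ‖K_{\bar{ν}d}‖) satisfies |α| = ζ₀, and |ν| = 1. -/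
open Filter ContinuousLinearMap
open scoped ComplexConjugate InnerProductSpace

noncomputable section

def kk (ζ : ℕ → ℝ) (s : ℂ) : ℂ := ∑' n, s ^ n / (ζ n : ℂ) ^ 2

def kr (ζ : ℕ → ℝ) (x : ℝ) : ℝ := ∑' n, x ^ n / (ζ n) ^ 2

lemma summable_re {ζ : ℕ → ℝ} (hζ : ∀ n, 0 < ζ n)
    (hlim : Tendsto (fun n : ℕ => (ζ n) ^ ((1 : ℝ) / n)) atTop atTop)
    (R : ℝ) (hR : 0 ≤ R) : Summable (fun n : ℕ => R ^ n / ζ n ^ 2) := by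
  apply Summable.of_norm_bounded_eventually_nat (g := fun n => (1/2 : ℝ) ^ n)
    (summable_geometric_of_lt_one (by norm_num) (by norm_num))
  filter_upwards [hlim.eventually_ge_atTop (R + 2), eventually_ge_atTop 1] with n h1 h2
  have hn : (n : ℝ) ≠ 0 := by exact_mod_cast (Nat.one_le_iff_ne_zero.mp h2)
  have hζn := hζ n
  have hb : (R + 2) ^ n ≤ ζ n := by
    calc (R + 2) ^ n ≤ ((ζ n) ^ ((1:ℝ)/n)) ^ n := by
          exact pow_le_pow_left₀ (by positivity) h1 n
    _ = ζ n := by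
          rw [← Real.rpow_natCast ((ζ n) ^ ((1:ℝ)/n)) n, ← Real.rpow_mul hζn.le,
            one_div, inv_mul_cancel₀ hn, Real.rpow_one]
  have hb2 : ((R + 2) ^ 2) ^ n ≤ ζ n ^ 2 := by
    rw [← pow_mul, mul_comm, pow_mul]
    exact pow_le_pow_left₀ (by positivity) hb 2
  have key : R ^ n / ζ n ^ 2 ≤ (1/2 : ℝ) ^ n := by
    calc R ^ n / ζ n ^ 2 ≤ R ^ n / ((R + 2) ^ 2) ^ n := by
          apply div_le_div_of_nonneg_left (by positivity) (by positivity) hb2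
    _ = (R / (R + 2) ^ 2) ^ n := by rw [div_pow]
    _ ≤ (1/2 : ℝ) ^ n := by
          apply pow_le_pow_left₀ (by positivity)
          rw [div_le_div_iff₀ (by positivity) (by norm_num)]
          nlinarith
  have hnn : 0 ≤ R ^ n / ζ n ^ 2 := by positivity
  rwa [Real.norm_eq_abs, abs_of_nonneg hnn]

lemma summable_r {ζ : ℕ → ℝ} (hζ : ∀ n, 0 < ζ n)
    (hlim : Tendsto (fun n : ℕ => (ζ n) ^ ((1 : ℝ) / n)) atTop atTop)
    (x : ℝ) : Summable (fun n : ℕ => x ^ n / ζ n ^ 2) := by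
  apply Summable.of_norm_bounded (summable_re hζ hlim |x| (abs_nonneg x))
  intro n
  have := hζ n
  rw [Real.norm_eq_abs, abs_div, abs_pow, abs_of_pos (by positivity : (0:ℝ) < ζ n ^ 2)]

lemma summable_c {ζ : ℕ → ℝ} (hζ : ∀ n, 0 < ζ n)
    (hlim : Tendsto (fun n : ℕ => (ζ n) ^ ((1 : ℝ) / n)) atTop atTop)
    (s : ℂ) : Summable (fun n : ℕ => s ^ n / (ζ n : ℂ) ^ 2) := by
  apply Summable.of_norm_bounded (summable_re hζ hlim ‖s‖ (norm_nonneg s))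
  intro n
  rw [norm_div, norm_pow, norm_pow, Complex.norm_real, Real.norm_eq_abs,
    abs_of_pos (hζ n)]

lemma kk_ofReal (ζ : ℕ → ℝ) (x : ℝ) : kk ζ (x : ℂ) = ((kr ζ x : ℝ) : ℂ) := by
  unfold kk kr
  rw [Complex.ofReal_tsum]
  exact tsum_congr fun n => by push_cast; ring

lemma kk_zero (ζ : ℕ → ℝ) : kk ζ 0 = 1 / (ζ 0 : ℂ) ^ 2 := by
  rw [kk, tsum_eq_single 0 (fun n hn => by simp [zero_pow hn])]
  simp

lemma kr_pos {ζ : ℕ → ℝ} (hζ : ∀ n, 0 < ζ n)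
    (hlim : Tendsto (fun n : ℕ => (ζ n) ^ ((1 : ℝ) / n)) atTop atTop)
    (x : ℝ) (hx : 0 ≤ x) : 0 < kr ζ x := by
  have h0 : (0:ℝ) < x ^ 0 / ζ 0 ^ 2 := by
    rw [pow_zero]
    exact div_pos one_pos (pow_pos (hζ 0) 2)
  refine lt_of_lt_of_le h0 (Summable.le_tsum (summable_r hζ hlim x) 0 fun j _ => ?_)
  have := hζ j
  positivity

lemma kr_mono {ζ : ℕ → ℝ} (hζ : ∀ n, 0 < ζ n)
    (hlim : Tendsto (fun n : ℕ => (ζ n) ^ ((1 : ℝ) / n)) atTop atTop)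
    (x y : ℝ) (hx : 0 ≤ x) (hxy : x < y) : kr ζ x < kr ζ y := by
  refine Summable.tsum_lt_tsum_of_nonneg (i := 1)
    (fun n => by have := hζ n; positivity)
    (fun n => by
      have := hζ n
      gcongr) ?_ (summable_r hζ hlim y)
  have := hζ 1
  rw [pow_one, pow_one]
  gcongr

lemma kk_real_ne {ζ : ℕ → ℝ} (hζ : ∀ n, 0 < ζ n)
    (hlim : Tendsto (fun n : ℕ => (ζ n) ^ ((1 : ℝ) / n)) atTop atTop)
    (x : ℝ) (hx : 0 ≤ x) : kk ζ (x : ℂ) ≠ 0 := by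
  rw [kk_ofReal]
  exact_mod_cast (kr_pos hζ hlim x hx).ne'


lemma hardy_div_helper (X b e : ℂ) (hb : b ≠ 0) (he : e ≠ 0) :
    X / (b * e ^ 2) = (b * e)⁻¹ * (X / e) := by
  field_simp

set_option maxHeartbeats 1000000 in
/-- For `Φ z = ν z - d` with `|ν| ≤ 1` and entire `Υ` with `C_{Υ,Φ}` bounded on `H_E(ζ)`:
if `C_{Υ,Φ}` is a co-isometry then `Υ z = α K_{conj ν * d} z / ‖K_{conj ν * d}‖` for all
`z`, where `α = 1 / (conj (Υ 0) ‖K_{conj ν * d}‖)` satisfies `|α| = ζ₀`, and `|ν| = 1`. -/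
theorem weighted_composition_coisometry_necessary
    (ζ : ℕ → ℝ) (hζ : ∀ n, 0 < ζ n)
    (hlim : Tendsto (fun n : ℕ => (ζ n) ^ ((1 : ℝ) / n)) atTop atTop)
    (ν d : ℂ) (hν : ‖ν‖ ≤ 1)
    (Υ : ℂ → ℂ) (hΥ : Differentiable ℂ Υ)
    (K : ℂ → HE ζ) (hK : ∀ p n, HE.coeff ζ (K p) n = (conj p) ^ n / (ζ n : ℂ) ^ 2)
    (T : HE ζ →L[ℂ] HE ζ)
    (hT : ∀ f : HE ζ, ∀ z : ℂ, HE.toFun ζ (T f) z = Υ z * HE.toFun ζ f (ν * z - d)) :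
    T.comp (adjoint T) = ContinuousLinearMap.id ℂ (HE ζ) →
      ((∀ z : ℂ, Υ z = (conj (Υ 0) * (‖K (conj ν * d)‖ : ℂ))⁻¹ *
          (HE.toFun ζ (K (conj ν * d)) z / (‖K (conj ν * d)‖ : ℂ))) ∧
       ‖(conj (Υ 0) * (‖K (conj ν * d)‖ : ℂ))⁻¹‖ = ζ 0 ∧
       ‖ν‖ = 1) := by
  intro hco
  have hζc : ∀ n, (ζ n : ℂ) ≠ 0 := fun n => Complex.ofReal_ne_zero.2 (hζ n).ne'
  have hKapp : ∀ p n, (K p) n = (conj p) ^ n / (ζ n : ℂ) := by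
    intro p n
    have h1 : (K p) n = HE.coeff ζ (K p) n * (ζ n : ℂ) := by
      rw [HE.coeff, div_mul_cancel₀ _ (hζc n)]
    rw [h1, hK, pow_two, ← div_div, div_mul_cancel₀ _ (hζc n)]
  have hrep : ∀ (f : HE ζ) (p : ℂ), ⟪K p, f⟫_ℂ = HE.toFun ζ f p := by
    intro f p
    rw [lp.inner_eq_tsum, HE.toFun]
    refine tsum_congr fun n => ?_
    rw [RCLike.inner_apply, hKapp, HE.coeff, map_div₀, map_pow, Complex.conj_conj,
      Complex.conj_ofReal]
    ring
  have hKK : ∀ p q : ℂ, ⟪K p, K q⟫_ℂ = kk ζ (p * conj q) := by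
    intro p q
    rw [lp.inner_eq_tsum, kk]
    refine tsum_congr fun n => ?_
    rw [RCLike.inner_apply, hKapp, hKapp, map_div₀, map_pow, Complex.conj_conj,
      Complex.conj_ofReal, mul_pow, pow_two]
    ring
  have hadj : ∀ z : ℂ, adjoint T (K z) = conj (Υ z) • K (ν * z - d) := by
    intro z
    refine ext_inner_right ℂ fun f => ?_
    rw [adjoint_inner_left, inner_smul_left, Complex.conj_conj, hrep, hrep, hT]
  have master : ∀ z u : ℂ,
      Υ z * conj (Υ (conj u)) * kk ζ ((ν * z - d) * (conj ν * u - conj d)) = kk ζ (z * u) := by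
    intro z u
    have h1 : ⟪adjoint T (K z), adjoint T (K (conj u))⟫_ℂ = ⟪K z, K (conj u)⟫_ℂ := by
      rw [adjoint_inner_left]
      congr 1
      have := congrArg (fun S : HE ζ →L[ℂ] HE ζ => S (K (conj u))) hco
      simpa using this
    rw [hadj, hadj, inner_smul_left, inner_smul_right, hKK, hKK, Complex.conj_conj] at h1
    have harg : conj (ν * conj u - d) = conj ν * u - conj d := by
      rw [map_sub, map_mul, Complex.conj_conj]
    have harg2 : z * conj (conj u) = z * u := by rw [Complex.conj_conj]
    rw [harg, harg2] at h1
    linear_combination h1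
  have hk0 : kk ζ 0 = 1 / (ζ 0 : ℂ) ^ 2 := by
    rw [kk, tsum_eq_single 0 (fun n hn => by simp [zero_pow hn])]
    simp
  have hk0ne : kk ζ 0 ≠ 0 := by
    rw [hk0]
    exact div_ne_zero one_ne_zero (pow_ne_zero 2 (hζc 0))
  have hνne : ν ≠ 0 := by
    intro h0
    have m00 := master 0 0
    have m01 := master 0 1
    have m10 := master 1 0
    have m11 := master 1 1
    simp only [h0, map_zero, map_one, zero_mul, mul_zero, mul_one, one_mul, zero_sub,
      neg_mul_neg] at m00 m01 m10 m11
    have key : kk ζ 1 * kk ζ 0 = kk ζ 0 * kk ζ 0 := by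
      calc kk ζ 1 * kk ζ 0
          = (Υ 1 * conj (Υ 1) * kk ζ (d * conj d)) * (Υ 0 * conj (Υ 0) * kk ζ (d * conj d)) := by
            rw [m11, m00]
        _ = (Υ 1 * conj (Υ 0) * kk ζ (d * conj d)) * (Υ 0 * conj (Υ 1) * kk ζ (d * conj d)) := by
            ring
        _ = kk ζ 0 * kk ζ 0 := by rw [m10, m01]
    have h10 : kk ζ 1 = kk ζ 0 := mul_right_cancel₀ hk0ne key
    have h10' : kr ζ 1 = kr ζ 0 := by
      rw [show (1:ℂ) = ((1:ℝ):ℂ) by norm_num, show (0:ℂ) = ((0:ℝ):ℂ) by norm_num,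
        kk_ofReal, kk_ofReal] at h10
      exact_mod_cast h10
    exact absurd h10' (kr_mono hζ hlim 0 1 le_rfl one_pos).ne'
  -- the distinguished point u₀ and constants
  set u₀ : ℂ := conj d / conj ν with hu₀def
  set A : ℂ := conj (Υ (conj u₀)) with hAdef
  set B : ℂ := conj (Υ 0) with hBdef
  have hνcne : conj ν ≠ 0 := by simpa using hνne
  have hu0 : conj ν * u₀ - conj d = 0 := by
    rw [hu₀def, mul_div_cancel₀ _ hνcne, sub_self]
  have hA : ∀ z : ℂ, Υ z * A * kk ζ 0 = kk ζ (z * u₀) := by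
    intro z
    have := master z u₀
    rwa [hu0, mul_zero] at this
  have hB : ∀ z : ℂ, Υ z * B * kk ζ ((ν * z - d) * (-conj d)) = kk ζ 0 := by
    intro z
    have := master z 0
    simpa using this
  have hAne : A ≠ 0 := by
    have h := hA (conj u₀)
    rw [show conj u₀ * u₀ = ((Complex.normSq u₀ : ℝ) : ℂ) by rw [mul_comm, Complex.mul_conj]] at h
    have hne : kk ζ ((Complex.normSq u₀ : ℝ) : ℂ) ≠ 0 :=
      kk_real_ne hζ hlim _ (Complex.normSq_nonneg _)
    intro hA0
    rw [hA0, mul_zero, zero_mul] at h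
    exact hne h.symm
  set R : ℝ := Complex.normSq d with hRdef
  have N0 : Υ 0 * B * kk ζ (R : ℂ) = kk ζ 0 := by
    have h := hB 0
    rwa [show (ν * 0 - d) * (-conj d) = ((R : ℝ) : ℂ) by
      rw [mul_zero, zero_sub, neg_mul_neg, Complex.mul_conj]] at h
  have hkRne : kk ζ (R : ℂ) ≠ 0 := kk_real_ne hζ hlim R (Complex.normSq_nonneg d)
  have hBne : B ≠ 0 := by
    intro h; rw [h, mul_zero, zero_mul] at N0; exact hk0ne N0.symm
  have hΥ0ne : Υ 0 ≠ 0 := by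
    intro h; rw [h, zero_mul, zero_mul] at N0; exact hk0ne N0.symm
  have hΥform : ∀ z : ℂ, Υ z = kk ζ (z * u₀) / (A * kk ζ 0) := by
    intro z
    rw [eq_div_iff (mul_ne_zero hAne hk0ne), ← mul_assoc]
    exact hA z
  set m : ℝ := Complex.normSq ν with hmdef
  have hm0 : 0 < m := Complex.normSq_pos.2 hνne
  have hννm : ν * conj ν = ((m:ℝ) : ℂ) := Complex.mul_conj ν
  have hν1 : ‖ν‖ = 1 := by
    by_contra hne1
    have hνlt : ‖ν‖ < 1 := lt_of_le_of_ne hν hne1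
    have hm1 : m < 1 := by
      have hmn : m = ‖ν‖ ^ 2 := by
        rw [hmdef, ← Complex.sq_norm]
      rw [hmn]
      nlinarith [norm_nonneg ν]
    by_cases hd : d = 0
    · -- constant symbol case
      have hu00 : u₀ = 0 := by rw [hu₀def, hd, map_zero, zero_div]
      have hconst : ∀ z : ℂ, Υ z = Υ 0 := by
        intro z
        have h1 := hA z
        have h2 := hA 0
        rw [hu00, mul_zero] at h1 h2
        exact mul_right_cancel₀ hAne (mul_right_cancel₀ hk0ne (h1.trans h2.symm))
      have hR0 : R = 0 := by rw [hRdef, hd, Complex.normSq_zero]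
      have hBB : Υ 0 * B = 1 := by
        have h := N0
        rw [hR0, Complex.ofReal_zero] at h
        apply mul_right_cancel₀ hk0ne
        rw [one_mul]
        exact h
      have m11 := master 1 1
      rw [map_one, hd] at m11
      rw [show (ν * 1 - 0) * (conj ν * 1 - conj (0:ℂ)) = ((m:ℝ):ℂ) by
        simp only [map_zero, mul_one, sub_zero]; exact hννm] at m11
      rw [hconst 1, ← hBdef] at m11
      rw [hBB, one_mul] at m11
      -- m11 : kk ζ m = kk ζ (1 * 1)
      rw [mul_one] at m11
      rw [show (1:ℂ) = ((1:ℝ):ℂ) by norm_num, kk_ofReal, kk_ofReal] at m11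
      have : kr ζ m = kr ζ 1 := by exact_mod_cast m11
      exact absurd this (kr_mono hζ hlim m 1 hm0.le hm1).ne
    · -- d ≠ 0 : derive the functional equation for kk
      have hdcne : conj d ≠ 0 := by simpa using hd
      set C : ℂ := A * kk ζ 0 * kk ζ 0 / B with hCdef
      have P : ∀ s : ℂ, kk ζ s * kk ζ ((R:ℂ) - (m:ℂ) * s) = C := by
        intro s
        have h1 := hB (conj ν * s / conj d)
        have harg : (ν * (conj ν * s / conj d) - d) * (-conj d) = (R:ℂ) - (m:ℂ) * s := by
          have e : ν * (conj ν * s / conj d) * conj d = ν * conj ν * s := by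
            rw [← mul_div_assoc, ← mul_assoc, div_mul_cancel₀ _ hdcne]
          rw [hRdef, show (ν * (conj ν * s / conj d) - d) * (-conj d)
            = -(ν * (conj ν * s / conj d) * conj d) + d * conj d by ring, e]
          linear_combination (-s) * hννm + Complex.mul_conj d
        rw [harg] at h1
        have h2 : Υ (conj ν * s / conj d) = kk ζ s / (A * kk ζ 0) := by
          rw [hΥform]
          congr 2
          rw [hu₀def]
          field_simp
        rw [h2] at h1
        have h3 : kk ζ s * kk ζ ((R:ℂ) - (m:ℂ)*s) * B = A * kk ζ 0 * kk ζ 0 := by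
          have h4 := h1
          field_simp at h4
          linear_combination h4
        rw [hCdef, eq_div_iff hBne]
        linear_combination h3
      have hCne : C ≠ 0 := by
        have h := P 0
        rw [mul_zero, sub_zero] at h
        rw [← h]
        exact mul_ne_zero hk0ne hkRne
      have hknev : ∀ s : ℂ, kk ζ s ≠ 0 := by
        intro s h
        apply hCne
        rw [← P s, h, zero_mul]
      have E : ∀ s : ℂ, kk ζ ((m:ℂ)^2 * s + (1 - (m:ℂ)) * (R:ℂ)) = kk ζ s := by
        intro s
        have p1 := P s
        have p2 := P ((R:ℂ) - (m:ℂ) * s)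
        rw [show (R:ℂ) - (m:ℂ) * ((R:ℂ) - (m:ℂ)*s) = (m:ℂ)^2*s + (1 - (m:ℂ))*(R:ℂ) by ring] at p2
        apply mul_right_cancel₀ (hknev ((R:ℂ) - (m:ℂ)*s))
        calc kk ζ ((m:ℂ)^2*s + (1 - (m:ℂ))*(R:ℂ)) * kk ζ ((R:ℂ) - (m:ℂ)*s) = C := by
              rw [← p2]; ring
          _ = kk ζ s * kk ζ ((R:ℂ) - (m:ℂ)*s) := p1.symm
      have hRpos : 0 < R := Complex.normSq_pos.2 hd
      have h1m : (0:ℝ) < 1 + m := by linarith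
      set x : ℝ := R / (1 + m) + 1 with hxdef
      set y : ℝ := R / (1 + m) + m ^ 2 with hydef
      have hxy : y < x := by rw [hxdef, hydef]; nlinarith
      have hy0 : 0 ≤ y := by
        have h5 : 0 ≤ R/(1+m) := (div_pos hRpos h1m).le
        rw [hydef]; nlinarith
      have hreal : m^2 * x + (1-m)*R = y := by
        rw [hxdef, hydef]
        field_simp
        ring
      have harg : (m:ℂ)^2 * ((x:ℝ):ℂ) + (1-(m:ℂ))*(R:ℂ) = ((y:ℝ):ℂ) := by
        rw [← hreal]
        push_cast
        ring
      have hE := E ((x:ℝ):ℂ)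
      rw [harg, kk_ofReal, kk_ofReal] at hE
      have hyx : kr ζ y = kr ζ x := by exact_mod_cast hE
      exact absurd hyx (kr_mono hζ hlim y x hy0 hxy).ne
  have hm1 : m = 1 := by
    rw [hmdef, ← Complex.sq_norm, hν1, one_pow]
  have hνν1 : ν * conj ν = 1 := by rw [hννm, hm1, Complex.ofReal_one]
  have hu0' : u₀ = ν * conj d := by
    rw [hu₀def, div_eq_iff hνcne]
    linear_combination (- conj d) * hνν1
  set p : ℂ := conj ν * d with hpdef
  have hconjp : conj p = u₀ := by
    rw [hpdef, map_mul, Complex.conj_conj, hu0', mul_comm]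
  set c : ℂ := (‖K p‖ : ℂ) with hcdef
  have hinner : ⟪K p, K p⟫_ℂ = ((kr ζ R : ℝ) : ℂ) := by
    rw [hKK, Complex.mul_conj,
      show Complex.normSq p = R by
        rw [hpdef, Complex.normSq_mul, Complex.normSq_conj, ← hmdef, ← hRdef, hm1, one_mul],
      kk_ofReal]
  have hcr : ‖K p‖ ^ 2 = kr ζ R := by
    have h := norm_sq_eq_re_inner (𝕜 := ℂ) (K p)
    rw [hinner] at h
    simpa using h
  have hKp2 : c ^ 2 = kk ζ (R : ℂ) := by
    rw [hcdef, kk_ofReal, ← hcr]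
    push_cast
    ring
  have hkrR : 0 < kr ζ R := kr_pos hζ hlim R (Complex.normSq_nonneg d)
  have hcne : c ≠ 0 := by
    intro h
    rw [h] at hKp2
    rw [zero_pow (by norm_num)] at hKp2
    exact hkRne hKp2.symm
  refine ⟨?_, ?_, hν1⟩
  · intro z
    have htoF : HE.toFun ζ (K p) z = kk ζ (z * u₀) := by
      rw [HE.toFun, kk]
      refine tsum_congr fun n => ?_
      rw [hK, hconjp, mul_pow]
      ring
    rw [htoF, hΥform z]
    have hA0 : Υ 0 * A = 1 := by
      have h := hA 0
      rw [zero_mul] at h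
      apply mul_right_cancel₀ hk0ne
      rw [one_mul]
      exact h
    have key : A * kk ζ 0 = B * c ^ 2 := by
      rw [hKp2]
      apply mul_left_cancel₀ hΥ0ne
      calc Υ 0 * (A * kk ζ 0) = kk ζ 0 := by rw [← mul_assoc, hA0, one_mul]
        _ = Υ 0 * (B * kk ζ (R:ℂ)) := by rw [← mul_assoc]; exact N0.symm
    rw [key]
    exact hardy_div_helper _ B c hBne hcne
  · have hBnorm : ‖B‖ = ‖Υ 0‖ := by rw [hBdef]; exact RCLike.norm_conj _
    have hcnorm : ‖c‖ = ‖K p‖ := by rw [hcdef, Complex.norm_real, norm_norm]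
    have hN0n : ‖Υ 0‖ * ‖Υ 0‖ * kr ζ R = 1 / (ζ 0) ^ 2 := by
      have h := congrArg norm N0
      rw [norm_mul, norm_mul, hBnorm] at h
      rw [show ‖kk ζ (R:ℂ)‖ = kr ζ R by
          rw [kk_ofReal, Complex.norm_real, Real.norm_eq_abs, abs_of_pos hkrR]] at h
      rw [show ‖kk ζ 0‖ = 1 / (ζ 0)^2 by
          rw [hk0, norm_div, norm_one, norm_pow, Complex.norm_real, Real.norm_eq_abs,
            abs_of_pos (hζ 0)]] at h
      exact h
    rw [norm_inv, norm_mul, hBnorm, hcnorm]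
    have hsq : (‖Υ 0‖ * ‖K p‖) ^ 2 = ((ζ 0)⁻¹) ^ 2 := by
      calc (‖Υ 0‖ * ‖K p‖) ^ 2 = ‖Υ 0‖ * ‖Υ 0‖ * ‖K p‖ ^ 2 := by ring
        _ = ‖Υ 0‖ * ‖Υ 0‖ * kr ζ R := by rw [hcr]
        _ = 1 / (ζ 0) ^ 2 := hN0n
        _ = ((ζ 0)⁻¹) ^ 2 := by rw [inv_pow, one_div]
    have h1 : 0 ≤ ‖Υ 0‖ * ‖K p‖ := by positivity
    have h2 : 0 < (ζ 0)⁻¹ := inv_pos.2 (hζ 0)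
    have heq : ‖Υ 0‖ * ‖K p‖ = (ζ 0)⁻¹ := by
      nlinarith [hsq, h1, h2, sq_nonneg (‖Υ 0‖ * ‖K p‖ - (ζ 0)⁻¹),
        sq_nonneg (‖Υ 0‖ * ‖K p‖ + (ζ 0)⁻¹)]
    rw [heq, inv_inv]
end
end
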